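/- arXiv:2104.14900 — 4 statements merged into one kernel-verified Lean document; each statement's English description precedes it below -/
import Mathlib

section
/- Let G1 and G2 be the empirical state-action measures generated from a one-step policy profile (h^1,…,h^N) ∈ H^N and from its average profile (ĥ,…,ĥ) with ĥ(x)(u) = (1/N) ∑_{i=1}^N h^i(x)(u), respectively, defined on a common probability space with arbitrary joint distribution but the specified marginals. Then E[‖G1 − G2‖₁²]^{1/2} ≤ |X|·|U|/√N. -/
/-!
STATEMENT 5: Let G1 and G2 be the empirical state-action measures generated from a
one-step policy profile (h¹,…,hᴺ) ∈ 𝓗ᴺ and from its average profile (ĥ,…,ĥ) with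
ĥ(x)(u) = (1/N) ∑ᵢ hⁱ(x)(u), respectively, defined on a common probability space with
arbitrary joint distribution but the specified marginals.
Then E[‖G1 − G2‖₁²]^{1/2} ≤ |X|·|U|/√N.
-/

open MeasureTheory ProbabilityTheory Finset

/-- The empirical state-action measure `G^N(ω)(x,u) = (1/N) ∑ᵢ 1{(xⁱ(ω),uⁱ(ω)) = (x,u)}`. -/
noncomputable def empMeasure {X U : Type*} [Fintype X] [Fintype U] [DecidableEq X]
    [DecidableEq U] {Ω : Type*} (N : ℕ) (Xr : Fin N → Ω → X) (Ur : Fin N → Ω → U)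
    (ω : Ω) (p : X × U) : ℝ :=
  (N : ℝ)⁻¹ * ∑ i, if (Xr i ω, Ur i ω) = p then 1 else 0




lemma bernoulli_variance_le {Ω : Type*} [MeasurableSpace Ω] (P : Measure Ω)
    [IsProbabilityMeasure P] {s : Set Ω} (hs : MeasurableSet s) :
    variance (s.indicator fun _ => (1:ℝ)) P ≤ 1/4 := by
  have hmem : MemLp (s.indicator fun _ => (1:ℝ)) 2 P :=
    memLp_indicator_const 2 hs 1 (Or.inr (measure_ne_top P s))
  rw [variance_eq_sub hmem]
  have hsq : (s.indicator fun _ => (1:ℝ)) ^ 2 = s.indicator fun _ => (1:ℝ) := by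
    funext ω; by_cases h : ω ∈ s <;> simp [Set.indicator_apply, h]
  have hint : ∫ ω, s.indicator (fun _ => (1:ℝ)) ω ∂P = (P s).toReal := by
    rw [integral_indicator_const _ hs]; simp [Measure.real]
  have hq0 : (0:ℝ) ≤ (P s).toReal := ENNReal.toReal_nonneg
  have hq1 : (P s).toReal ≤ 1 := by
    have := prob_le_one (μ := P) (s := s)
    simpa using ENNReal.toReal_mono ENNReal.one_ne_top this
  rw [hsq]
  simp only [hint]
  nlinarith [hq0, hq1, sq_nonneg ((P s).toReal - 1/2)]

lemma emp_key {V Ω : Type*} [DecidableEq V] [MeasurableSpace V]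
    [MeasurableSingletonClass V] [MeasurableSpace Ω] (P : Measure Ω) [IsProbabilityMeasure P]
    {N : ℕ} (hN : 1 ≤ N) (Z : Fin N → Ω → V)
    (hmeas : ∀ i, Measurable (Z i))
    (hindep : iIndepFun Z P) (v : V) :
    MemLp (fun ω => (N:ℝ)⁻¹ * ∑ i, if Z i ω = v then (1:ℝ) else 0) 2 P ∧
    variance (fun ω => (N:ℝ)⁻¹ * ∑ i, if Z i ω = v then (1:ℝ) else 0) P ≤ 1/(4*N) ∧
    ∫ ω, ((N:ℝ)⁻¹ * ∑ i, if Z i ω = v then (1:ℝ) else 0) ∂P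
      = (N:ℝ)⁻¹ * ∑ i, (P (Z i ⁻¹' {v})).toReal := by
  classical
  set f : Fin N → Ω → ℝ := fun i => (Z i ⁻¹' {v}).indicator fun _ => (1:ℝ) with hf
  have hfe : ∀ i ω, f i ω = if Z i ω = v then (1:ℝ) else 0 := by
    intro i ω; simp [hf, Set.indicator_apply, Set.mem_preimage]
  have hms : ∀ i, MeasurableSet (Z i ⁻¹' {v}) := fun i =>
    (hmeas i) (measurableSet_singleton v)
  have hmemf : ∀ i, MemLp (f i) 2 P := fun i =>
    memLp_indicator_const 2 (hms i) 1 (Or.inr (measure_ne_top P _))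
  have hNpos : (0:ℝ) < N := by exact_mod_cast hN
  -- rewrite the main function
  have hfun : (fun ω => (N:ℝ)⁻¹ * ∑ i, if Z i ω = v then (1:ℝ) else 0)
      = fun ω => (N:ℝ)⁻¹ * (∑ i, f i) ω := by
    funext ω; simp [hfe]
  have hmemG : MemLp (fun ω => (N:ℝ)⁻¹ * ∑ i, if Z i ω = v then (1:ℝ) else 0) 2 P := by
    rw [hfun]
    exact (memLp_finset_sum' univ fun i _ => hmemf i).const_mul _
  refine ⟨hmemG, ?_, ?_⟩
  · -- variance bound
    rw [hfun, variance_const_mul]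
    have hpw : Set.Pairwise ↑(univ : Finset (Fin N)) fun i j => IndepFun (f i) (f j) P := by
      intro i _ j _ hij
      have hZ : IndepFun (Z i) (Z j) P := hindep.indepFun hij
      have : IndepFun (((({v} : Set V)).indicator fun _ => (1:ℝ)) ∘ Z i)
          ((({v} : Set V)).indicator (fun _ => (1:ℝ)) ∘ Z j) P :=
        hZ.comp (measurable_const.indicator (measurableSet_singleton v))
          (measurable_const.indicator (measurableSet_singleton v))
      convert this using 2 <;> (funext ω; simp [hfe, Set.indicator_apply, Function.comp])
    rw [IndepFun.variance_sum (fun i _ => hmemf i) hpw]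
    have hvar : ∀ i ∈ (univ : Finset (Fin N)), variance (f i) P ≤ 1/4 := fun i _ =>
      bernoulli_variance_le P (hms i)
    calc ((N:ℝ)⁻¹)^2 * ∑ i, variance (f i) P
        ≤ ((N:ℝ)⁻¹)^2 * ∑ _i : Fin N, (1/4 : ℝ) := by
          apply mul_le_mul_of_nonneg_left (Finset.sum_le_sum hvar) (by positivity)
      _ = ((N:ℝ)⁻¹)^2 * (N * (1/4)) := by simp [Finset.sum_const, mul_comm]
      _ = 1/(4*N) := by field_simp
  · -- mean
    rw [hfun]
    simp only [Finset.sum_apply]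
    rw [integral_const_mul, integral_finset_sum _ (fun i _ => (hmemf i).integrable one_le_two)]
    congr 1
    apply Finset.sum_congr rfl
    intro i _
    rw [hf]
    rw [integral_indicator_const _ (hms i)]
    simp [Measure.real]

theorem empirical_measure_average_policy_L2_bound
    {X U : Type*} [Fintype X] [Fintype U] [Nonempty X] [Nonempty U]
    [DecidableEq X] [DecidableEq U]
    [MeasurableSpace X] [MeasurableSingletonClass X]
    [MeasurableSpace U] [MeasurableSingletonClass U]
    {Ω : Type*} [MeasurableSpace Ω] (P : Measure Ω) [IsProbabilityMeasure P]
    (N : ℕ) (hN : 1 ≤ N)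
    -- the fixed agent state distribution μ₀ ∈ 𝒫(X)
    (μ0 : ↥(stdSimplex ℝ X))
    -- the one-step policy profile (h¹, …, hᴺ) ∈ 𝓗ᴺ, where 𝓗 = {h : X → 𝒫(U)}
    (h : Fin N → X → ↥(stdSimplex ℝ U))
    -- the random states and actions (xⁱ, uⁱ) generating G1 from the profile (h¹, …, hᴺ)
    (Xr : Fin N → Ω → X) (Ur : Fin N → Ω → U)
    -- the random states and actions (x̂ⁱ, ûⁱ) generating G2 from the averaged
    -- profile (ĥ, …, ĥ); the joint distribution of the two families is arbitrary
    (Xr' : Fin N → Ω → X) (Ur' : Fin N → Ω → U)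
    (hmeas : ∀ i, Measurable (fun ω => (Xr i ω, Ur i ω)))
    (hmeas' : ∀ i, Measurable (fun ω => (Xr' i ω, Ur' i ω)))
    -- the pairs are independent across agents, within each of the two families
    (hindep : iIndepFun (fun i ω => (Xr i ω, Ur i ω)) P)
    (hindep' : iIndepFun (fun i ω => (Xr' i ω, Ur' i ω)) P)
    -- xⁱ ~ μ₀ and uⁱ | xⁱ ~ hⁱ(xⁱ)
    (hlaw : ∀ i (x : X) (u : U),
      P {ω | Xr i ω = x ∧ Ur i ω = u} = ENNReal.ofReal (μ0.1 x * (h i x).1 u))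
    -- x̂ⁱ ~ μ₀ and ûⁱ | x̂ⁱ ~ ĥ(x̂ⁱ), where ĥ(x)(u) = (1/N) ∑ⱼ hʲ(x)(u)
    (hlaw' : ∀ i (x : X) (u : U),
      P {ω | Xr' i ω = x ∧ Ur' i ω = u}
        = ENNReal.ofReal (μ0.1 x * ((N : ℝ)⁻¹ * ∑ j, (h j x).1 u))) :
    Real.sqrt (∫ ω, (∑ p : X × U,
        |empMeasure N Xr Ur ω p - empMeasure N Xr' Ur' ω p|) ^ 2 ∂P)
      ≤ (Fintype.card X : ℝ) * (Fintype.card U : ℝ) / Real.sqrt N := by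
  classical
  have hNpos : (0:ℝ) < N := by exact_mod_cast hN
  have hNne : (N:ℝ) ≠ 0 := ne_of_gt hNpos
  set G1 : X × U → Ω → ℝ := fun p ω => empMeasure N Xr Ur ω p with hG1
  set G2 : X × U → Ω → ℝ := fun p ω => empMeasure N Xr' Ur' ω p with hG2
  -- apply emp_key to both families
  have key1 := fun p => emp_key P hN (fun i ω => (Xr i ω, Ur i ω)) hmeas hindep p
  have key2 := fun p => emp_key P hN (fun i ω => (Xr' i ω, Ur' i ω)) hmeas' hindep' p
  have hG1e : ∀ p, G1 p = fun ω => (N:ℝ)⁻¹ * ∑ i, if (Xr i ω, Ur i ω) = p then (1:ℝ) else 0 :=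
    fun p => rfl
  have hG2e : ∀ p, G2 p = fun ω => (N:ℝ)⁻¹ * ∑ i, if (Xr' i ω, Ur' i ω) = p then (1:ℝ) else 0 :=
    fun p => rfl
  have hmem1 : ∀ p, MemLp (G1 p) 2 P := fun p => by rw [hG1e p]; exact (key1 p).1
  have hmem2 : ∀ p, MemLp (G2 p) 2 P := fun p => by rw [hG2e p]; exact (key2 p).1
  have hvar1 : ∀ p, variance (G1 p) P ≤ 1/(4*N) := fun p => by
    rw [hG1e p]; exact (key1 p).2.1
  have hvar2 : ∀ p, variance (G2 p) P ≤ 1/(4*N) := fun p => by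
    rw [hG2e p]; exact (key2 p).2.1
  -- equal means
  have hpre : ∀ i (p : X × U),
      (fun ω => (Xr i ω, Ur i ω)) ⁻¹' {p} = {ω | Xr i ω = p.1 ∧ Ur i ω = p.2} := by
    intro i p; ext ω; simp [Prod.ext_iff]
  have hpre' : ∀ i (p : X × U),
      (fun ω => (Xr' i ω, Ur' i ω)) ⁻¹' {p} = {ω | Xr' i ω = p.1 ∧ Ur' i ω = p.2} := by
    intro i p; ext ω; simp [Prod.ext_iff]
  have hmean : ∀ p, ∫ ω, G1 p ω ∂P = ∫ ω, G2 p ω ∂P := by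
    rintro ⟨x, u⟩
    have e1 : ∫ ω, G1 (x, u) ω ∂P
        = (N:ℝ)⁻¹ * ∑ i, (μ0.1 x * (h i x).1 u) := by
      rw [show (∫ ω, G1 (x,u) ω ∂P) = ∫ ω, ((N:ℝ)⁻¹ * ∑ i, if (Xr i ω, Ur i ω) = (x,u) then (1:ℝ) else 0) ∂P from rfl,
        (key1 (x,u)).2.2]
      congr 1
      refine Finset.sum_congr rfl fun i _ => ?_
      rw [hpre i (x,u), hlaw i x u, ENNReal.toReal_ofReal]
      exact mul_nonneg (μ0.2.1 x) ((h i x).2.1 u)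
    have e2 : ∫ ω, G2 (x, u) ω ∂P
        = (N:ℝ)⁻¹ * ∑ _i : Fin N, (μ0.1 x * ((N:ℝ)⁻¹ * ∑ j, (h j x).1 u)) := by
      rw [show (∫ ω, G2 (x,u) ω ∂P) = ∫ ω, ((N:ℝ)⁻¹ * ∑ i, if (Xr' i ω, Ur' i ω) = (x,u) then (1:ℝ) else 0) ∂P from rfl,
        (key2 (x,u)).2.2]
      congr 1
      refine Finset.sum_congr rfl fun i _ => ?_
      rw [hpre' i (x,u), hlaw' i x u, ENNReal.toReal_ofReal]
      refine mul_nonneg (μ0.2.1 x) (mul_nonneg (by positivity) ?_)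
      exact Finset.sum_nonneg fun j _ => (h j x).2.1 u
    have hms : ∑ i : Fin N, μ0.1 x * (h i x).1 u = μ0.1 x * ∑ j, (h j x).1 u :=
      (Finset.mul_sum _ _ _).symm
    rw [e1, e2, hms, Finset.sum_const, Finset.card_univ, Fintype.card_fin, nsmul_eq_mul]
    field_simp
  -- per-coordinate second moment bound
  have key : ∀ p, ∫ ω, (G1 p ω - G2 p ω)^2 ∂P ≤ 1/N := by
    intro p
    set m : ℝ := ∫ ω, G1 p ω ∂P with hm
    have hm2 : ∫ ω, G2 p ω ∂P = m := (hmean p).symm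
    have hv1 : ∫ ω, (G1 p ω - m)^2 ∂P = variance (G1 p) P := by
      exact (variance_eq_integral (hmem1 p).aemeasurable).symm
    have hv2 : ∫ ω, (G2 p ω - m)^2 ∂P = variance (G2 p) P := by
      rw [variance_eq_integral (hmem2 p).aemeasurable, hm2]
    have hint1 : Integrable (fun ω => (G1 p ω - m)^2) P := by
      have := ((hmem1 p).sub (memLp_const m)).integrable_sq
      simpa [Pi.sub_apply] using this
    have hint2 : Integrable (fun ω => (G2 p ω - m)^2) P := by
      have := ((hmem2 p).sub (memLp_const m)).integrable_sq
      simpa [Pi.sub_apply] using this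
    have hptw : ∀ ω, (G1 p ω - G2 p ω)^2 ≤ 2*(G1 p ω - m)^2 + 2*(G2 p ω - m)^2 := by
      intro ω; nlinarith [sq_nonneg (G1 p ω + G2 p ω - 2*m)]
    calc ∫ ω, (G1 p ω - G2 p ω)^2 ∂P
        ≤ ∫ ω, (2*(G1 p ω - m)^2 + 2*(G2 p ω - m)^2) ∂P := by
          refine integral_mono_of_nonneg (ae_of_all _ fun ω => sq_nonneg _) ?_
            (ae_of_all _ hptw)
          exact (hint1.const_mul 2).add (hint2.const_mul 2)
      _ = 2 * ∫ ω, (G1 p ω - m)^2 ∂P + 2 * ∫ ω, (G2 p ω - m)^2 ∂P := by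
          rw [integral_add (hint1.const_mul 2) (hint2.const_mul 2),
            integral_const_mul, integral_const_mul]
      _ ≤ 2 * (1/(4*N)) + 2 * (1/(4*N)) := by
          rw [hv1, hv2]
          have h1 := hvar1 p; have h2 := hvar2 p
          linarith
      _ = 1/N := by field_simp; norm_num
  -- assemble
  set K : ℝ := (Fintype.card X : ℝ) * (Fintype.card U : ℝ) with hK
  have hK0 : 0 ≤ K := by positivity
  have hintD : ∀ p, Integrable (fun ω => (G1 p ω - G2 p ω)^2) P := fun p => by
    have := ((hmem1 p).sub (hmem2 p)).integrable_sq
    simpa [Pi.sub_apply] using this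
  have hcard : (Fintype.card (X × U) : ℝ) = K := by
    rw [hK]; push_cast [Fintype.card_prod]; ring
  have big : ∫ ω, (∑ p : X × U, |G1 p ω - G2 p ω|)^2 ∂P ≤ K^2 / N := by
    have hptw : ∀ ω, (∑ p : X × U, |G1 p ω - G2 p ω|)^2
        ≤ K * ∑ p : X × U, (G1 p ω - G2 p ω)^2 := by
      intro ω
      have := sq_sum_le_card_mul_sum_sq (s := (univ : Finset (X × U)))
        (f := fun p => |G1 p ω - G2 p ω|)
      simpa [sq_abs, Finset.card_univ, hcard] using this
    calc ∫ ω, (∑ p : X × U, |G1 p ω - G2 p ω|)^2 ∂P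
        ≤ ∫ ω, K * ∑ p : X × U, (G1 p ω - G2 p ω)^2 ∂P := by
          refine integral_mono_of_nonneg (ae_of_all _ fun ω => sq_nonneg _) ?_
            (ae_of_all _ hptw)
          exact (integrable_finset_sum _ fun p _ => hintD p).const_mul K
      _ = K * ∑ p : X × U, ∫ ω, (G1 p ω - G2 p ω)^2 ∂P := by
          rw [integral_const_mul, integral_finset_sum _ fun p _ => hintD p]
      _ ≤ K * ∑ _p : X × U, (1/N : ℝ) := by
          exact mul_le_mul_of_nonneg_left (Finset.sum_le_sum fun p _ => key p) hK0
      _ = K * (K / N) := by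
          rw [Finset.sum_const, Finset.card_univ, nsmul_eq_mul, hcard]; ring
      _ = K^2 / N := by ring
  calc Real.sqrt (∫ ω, (∑ p : X × U, |G1 p ω - G2 p ω|)^2 ∂P)
      ≤ Real.sqrt (K^2 / N) := Real.sqrt_le_sqrt big
    _ = K / Real.sqrt N := by
        rw [Real.sqrt_div (sq_nonneg K), Real.sqrt_sq hK0]
end

section
/- Let G1 and G2 be the empirical state-action measures generated from a one-step policy profile (h^1,…,h^N) ∈ H^N and from its average profile (ĥ,…,ĥ) with ĥ(x)(u) = (1/N) ∑_{i=1}^N h^i(x)(u), respectively, defined on a common probability space with arbitrary joint distribution but the specified marginals. Then for every ε > 0, P(‖G1 − G2‖₁ ≥ ε) ≤ |X|²|U|²/(ε²N). -/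
/-!
STATEMENT 6: Let G1 and G2 be the empirical state-action measures generated from a
one-step policy profile (h¹,…,hᴺ) ∈ 𝓗ᴺ and from its average profile (ĥ,…,ĥ) with
ĥ(x)(u) = (1/N) ∑ᵢ hⁱ(x)(u), respectively, defined on a common probability space with
arbitrary joint distribution but the specified marginals.
Then for every ε > 0, P(‖G1 − G2‖₁ ≥ ε) ≤ |X|²|U|²/(ε²N).
-/

open MeasureTheory ProbabilityTheory Finset

lemma integrable_of_bdd {Ω : Type*} [MeasurableSpace Ω] {P : Measure Ω}
    [IsProbabilityMeasure P] {g : Ω → ℝ} (hg : Measurable g) {C : ℝ}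
    (hC : ∀ ω, |g ω| ≤ C) : Integrable g P :=
  ⟨hg.aestronglyMeasurable, HasFiniteIntegral.of_bounded (ae_of_all _ fun ω => by
    simpa [Real.norm_eq_abs] using hC ω)⟩

lemma avg_abs_le {N : ℕ} (g : Fin N → ℝ) (hg : ∀ i, |g i| ≤ 1) :
    |(N:ℝ)⁻¹ * ∑ i, g i| ≤ 1 := by
  rw [abs_mul, abs_inv, Nat.abs_cast]
  have h2 : |∑ i, g i| ≤ (N:ℝ) :=
    (Finset.abs_sum_le_sum_abs _ _).trans (by
      calc ∑ i, |g i| ≤ ∑ _i : Fin N, (1:ℝ) := Finset.sum_le_sum fun i _ => hg i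
        _ = N := by simp)
  rcases Nat.eq_zero_or_pos N with hc | hc
  · subst hc; simp
  · have hpos : (0:ℝ) < N := by exact_mod_cast hc
    calc (N:ℝ)⁻¹ * |∑ i, g i| ≤ (N:ℝ)⁻¹ * N := by
          exact mul_le_mul_of_nonneg_left h2 (by positivity)
      _ = 1 := by field_simp

lemma second_moment_bound {Ω : Type*} [MeasurableSpace Ω] (P : Measure Ω)
    [IsProbabilityMeasure P] (N : ℕ) (hN : 1 ≤ N) (A : Fin N → Ω → ℝ)
    (hAm : ∀ i, Measurable (A i))
    (h01 : ∀ i ω, A i ω = 0 ∨ A i ω = 1)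
    (hind : ∀ i j, i ≠ j →
      ∫ ω, A i ω * A j ω ∂P = (∫ ω, A i ω ∂P) * (∫ ω, A j ω ∂P)) :
    ∫ ω, ((N:ℝ)⁻¹ * ∑ i, A i ω - (N:ℝ)⁻¹ * ∑ i, ∫ ω', A i ω' ∂P) ^ 2 ∂P
      ≤ ((4:ℝ) * N)⁻¹ := by
  have hNpos : (0:ℝ) < N := by exact_mod_cast hN
  set a : Fin N → ℝ := fun i => ∫ ω, A i ω ∂P with ha
  have hbd : ∀ i ω, |A i ω| ≤ 1 := by
    intro i ω; rcases h01 i ω with h | h <;> simp [h]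
  have hInt : ∀ i, Integrable (A i) P := fun i => integrable_of_bdd (hAm i) (hbd i)
  have hIntM : ∀ i j, Integrable (fun ω => A i ω * A j ω) P := by
    intro i j
    refine integrable_of_bdd ((hAm i).mul (hAm j)) (C := 1) fun ω => ?_
    rw [abs_mul]
    exact mul_le_one₀ (hbd i ω) (abs_nonneg _) (hbd j ω)
  have hsq : ∀ i ω, A i ω * A i ω = A i ω := by
    intro i ω; rcases h01 i ω with h | h <;> simp [h]
  have hkey : ∀ i j, ∫ ω, A i ω * A j ω ∂P = if i = j then a i else a i * a j := by
    intro i j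
    by_cases hij : i = j
    · subst hij; simp only [if_pos rfl, ha]
      exact integral_congr_ae (ae_of_all _ fun ω => hsq i ω)
    · rw [if_neg hij]; exact hind i j hij
  set M : ℝ := ∑ i, a i with hM
  have hIntS : Integrable (fun ω => ∑ i, A i ω) P := integrable_finset_sum _ fun i _ => hInt i
  have hIntSS : Integrable (fun ω => ∑ i, ∑ j, A i ω * A j ω) P :=
    integrable_finset_sum _ fun i _ => integrable_finset_sum _ fun j _ => hIntM i j
  have expand : ∀ ω, ((N:ℝ)⁻¹ * ∑ i, A i ω - (N:ℝ)⁻¹ * M) ^ 2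
      = ((N:ℝ)⁻¹)^2 * ((∑ i, ∑ j, A i ω * A j ω) - 2 * M * (∑ i, A i ω) + M ^ 2) := by
    intro ω
    rw [Finset.sum_mul_sum (Finset.univ) (Finset.univ) (fun i => A i ω) (fun j => A j ω) |>.symm]
    ring
  calc ∫ ω, ((N:ℝ)⁻¹ * ∑ i, A i ω - (N:ℝ)⁻¹ * ∑ i, ∫ ω', A i ω' ∂P) ^ 2 ∂P
      = ∫ ω, ((N:ℝ)⁻¹)^2 * ((∑ i, ∑ j, A i ω * A j ω) - 2 * M * (∑ i, A i ω) + M ^ 2) ∂P := by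
        exact integral_congr_ae (ae_of_all _ fun ω => expand ω)
    _ = ((N:ℝ)⁻¹)^2 * ((∑ i, ∑ j, ∫ ω, A i ω * A j ω ∂P) - 2 * M * M + M ^ 2) := by
        have I2 : Integrable (fun ω => (∑ i, ∑ j, A i ω * A j ω) - 2 * M * (∑ i, A i ω)) P :=
          hIntSS.sub (hIntS.const_mul (2*M))
        have I3 : Integrable (fun ω => 2 * M * (∑ i, A i ω)) P := hIntS.const_mul (2*M)
        have hDS : ∫ ω, ∑ i, ∑ j, A i ω * A j ω ∂P = ∑ i, ∑ j, ∫ ω, A i ω * A j ω ∂P := by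
          rw [integral_finset_sum _ (fun i _ => integrable_finset_sum _ fun j _ => hIntM i j)]
          exact Finset.sum_congr rfl fun i _ => integral_finset_sum _ fun j _ => hIntM i j
        have hS : ∫ ω, ∑ i, A i ω ∂P = M := by
          rw [integral_finset_sum _ fun i _ => hInt i]
        rw [integral_const_mul,
          integral_add I2 (integrable_const (M^2)),
          integral_sub hIntSS I3,
          integral_const_mul, integral_const, hDS, hS]
        simp
    _ = ((N:ℝ)⁻¹)^2 * (∑ i, (a i - a i ^ 2)) := by
        have inner : ∀ i : Fin N, (∑ j, if i = j then a i else a i * a j)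
            = (a i - a i ^ 2) + a i * M := by
          intro i
          have : ∀ j : Fin N, (if i = j then a i else a i * a j)
              = a i * a j + (if i = j then a i - a i * a i else 0) := by
            intro j; by_cases hj : i = j
            · subst hj; simp
            · simp [hj]
          rw [Finset.sum_congr rfl fun j _ => this j, Finset.sum_add_distrib,
            ← Finset.mul_sum, Finset.sum_ite_eq]
          simp only [Finset.mem_univ, if_true, ← hM]
          ring_nf
        have outer : ∑ i, ∑ j, ∫ ω, A i ω * A j ω ∂P
            = (∑ i, (a i - a i ^ 2)) + M * M := by
          calc ∑ i, ∑ j, ∫ ω, A i ω * A j ω ∂P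
              = ∑ i, ((a i - a i ^ 2) + a i * M) := by
                refine Finset.sum_congr rfl fun i _ => ?_
                rw [Finset.sum_congr rfl fun j _ => hkey i j]
                exact inner i
            _ = (∑ i, (a i - a i ^ 2)) + M * M := by
                rw [Finset.sum_add_distrib, ← Finset.sum_mul]
        rw [outer]; ring_nf
    _ ≤ ((N:ℝ)⁻¹)^2 * (N * (1/4)) := by
        apply mul_le_mul_of_nonneg_left _ (by positivity)
        calc ∑ i, (a i - a i ^ 2) ≤ ∑ _i : Fin N, (1/4 : ℝ) := by
              refine Finset.sum_le_sum fun i _ => ?_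
              nlinarith [sq_nonneg (a i - 1/2)]
          _ = N * (1/4) := by simp [mul_comm]
    _ = ((4:ℝ) * N)⁻¹ := by field_simp

lemma indicator_fn_measurable {V : Type*} [MeasurableSpace V] [MeasurableSingletonClass V]
    [DecidableEq V] (p : V) : Measurable (fun v => if v = p then (1:ℝ) else 0) := by
  have hs : MeasurableSet {v : V | v = p} := by
    simp only [Set.setOf_eq_eq_singleton]
    exact measurableSet_singleton p
  exact Measurable.ite hs measurable_const measurable_const

lemma indicator_indep_integral {Ω : Type*} [MeasurableSpace Ω] (P : Measure Ω)
    [IsProbabilityMeasure P] {V : Type*} [MeasurableSpace V] [MeasurableSingletonClass V]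
    [DecidableEq V] (N : ℕ) (Z : Fin N → Ω → V) (hZ : ∀ i, Measurable (Z i))
    (hind : iIndepFun Z P) (p : V) (i j : Fin N) (hij : i ≠ j) :
    ∫ ω, (if Z i ω = p then (1:ℝ) else 0) * (if Z j ω = p then (1:ℝ) else 0) ∂P
      = (∫ ω, (if Z i ω = p then (1:ℝ) else 0) ∂P)
        * ∫ ω, (if Z j ω = p then (1:ℝ) else 0) ∂P := by
  have hfm := indicator_fn_measurable (V := V) p
  have hIF : IndepFun ((fun v => if v = p then (1:ℝ) else 0) ∘ Z i)
      ((fun v => if v = p then (1:ℝ) else 0) ∘ Z j) P :=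
    (hind.indepFun hij).comp hfm hfm
  have hbd : ∀ (k : Fin N) (ω : Ω), |(if Z k ω = p then (1:ℝ) else 0)| ≤ 1 := by
    intro k ω; split <;> simp
  have hInt : ∀ k, Integrable (fun ω => if Z k ω = p then (1:ℝ) else 0) P :=
    fun k => integrable_of_bdd (hfm.comp (hZ k)) (hbd k)
  exact hIF.integral_fun_mul_eq_mul_integral (hInt i).aestronglyMeasurable (hInt j).aestronglyMeasurable

lemma integral_indicator_eq {Ω : Type*} [MeasurableSpace Ω] (P : Measure Ω)
    [IsProbabilityMeasure P] {V : Type*} [MeasurableSpace V] [MeasurableSingletonClass V]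
    [DecidableEq V] (Z : Ω → V) (hZ : Measurable Z) (p : V) :
    ∫ ω, (if Z ω = p then (1:ℝ) else 0) ∂P = (P {ω | Z ω = p}).toReal := by
  have he : (fun ω => (if Z ω = p then (1:ℝ) else 0))
      = Set.indicator (Z ⁻¹' {p}) (fun _ => (1:ℝ)) := by
    funext ω
    by_cases hω : Z ω = p
    · simp [hω]
    · simp [hω]
  rw [he, integral_indicator_const (1:ℝ) (hZ (measurableSet_singleton p))]
  have : Z ⁻¹' {p} = {ω | Z ω = p} := by ext ω; simp
  rw [this]; simp; rfl

theorem empirical_measure_average_policy_concentration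
    {X U : Type*} [Fintype X] [Fintype U] [Nonempty X] [Nonempty U]
    [DecidableEq X] [DecidableEq U]
    [MeasurableSpace X] [MeasurableSingletonClass X]
    [MeasurableSpace U] [MeasurableSingletonClass U]
    {Ω : Type*} [MeasurableSpace Ω] (P : Measure Ω) [IsProbabilityMeasure P]
    (N : ℕ) (hN : 1 ≤ N)
    -- the fixed agent state distribution μ₀ ∈ 𝒫(X)
    (μ0 : ↥(stdSimplex ℝ X))
    -- the one-step policy profile (h¹, …, hᴺ) ∈ 𝓗ᴺ, where 𝓗 = {h : X → 𝒫(U)}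
    (h : Fin N → X → ↥(stdSimplex ℝ U))
    -- the random states and actions (xⁱ, uⁱ) generating G1 from the profile (h¹, …, hᴺ)
    (Xr : Fin N → Ω → X) (Ur : Fin N → Ω → U)
    -- the random states and actions (x̂ⁱ, ûⁱ) generating G2 from the averaged
    -- profile (ĥ, …, ĥ); the joint distribution of the two families is arbitrary
    (Xr' : Fin N → Ω → X) (Ur' : Fin N → Ω → U)
    (hmeas : ∀ i, Measurable (fun ω => (Xr i ω, Ur i ω)))
    (hmeas' : ∀ i, Measurable (fun ω => (Xr' i ω, Ur' i ω)))
    -- the pairs are independent across agents, within each of the two families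
    (hindep : iIndepFun (fun i ω => (Xr i ω, Ur i ω)) P)
    (hindep' : iIndepFun (fun i ω => (Xr' i ω, Ur' i ω)) P)
    -- xⁱ ~ μ₀ and uⁱ | xⁱ ~ hⁱ(xⁱ)
    (hlaw : ∀ i (x : X) (u : U),
      P {ω | Xr i ω = x ∧ Ur i ω = u} = ENNReal.ofReal (μ0.1 x * (h i x).1 u))
    -- x̂ⁱ ~ μ₀ and ûⁱ | x̂ⁱ ~ ĥ(x̂ⁱ), where ĥ(x)(u) = (1/N) ∑ⱼ hʲ(x)(u)
    (hlaw' : ∀ i (x : X) (u : U),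
      P {ω | Xr' i ω = x ∧ Ur' i ω = u}
        = ENNReal.ofReal (μ0.1 x * ((N : ℝ)⁻¹ * ∑ j, (h j x).1 u))) :
    ∀ ε : ℝ, 0 < ε →
      P {ω | ε ≤ ∑ p : X × U,
          |empMeasure N Xr Ur ω p - empMeasure N Xr' Ur' ω p|}
        ≤ ENNReal.ofReal
          ((Fintype.card X : ℝ) ^ 2 * (Fintype.card U : ℝ) ^ 2 / (ε ^ 2 * N)) := by
  intro ε hε
  classical
  have hNpos : (0:ℝ) < N := by exact_mod_cast hN
  set Z : Fin N → Ω → X × U := fun i ω => (Xr i ω, Ur i ω) with hZ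
  set Z' : Fin N → Ω → X × U := fun i ω => (Xr' i ω, Ur' i ω) with hZ'
  set A : (X × U) → Fin N → Ω → ℝ := fun p i ω => if Z i ω = p then 1 else 0 with hA
  set B : (X × U) → Fin N → Ω → ℝ := fun p i ω => if Z' i ω = p then 1 else 0 with hB
  -- the means
  have hval : ∀ (p : X × U) i, ∫ ω, A p i ω ∂P = μ0.1 p.1 * (h i p.1).1 p.2 := by
    intro p i
    rw [show (fun ω => A p i ω) = fun ω => if Z i ω = p then (1:ℝ) else 0 from rfl,
      integral_indicator_eq P (Z i) (hmeas i) p]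
    have hset : {ω | Z i ω = p} = {ω | Xr i ω = p.1 ∧ Ur i ω = p.2} := by
      ext ω; simp [hZ, Prod.ext_iff]
    rw [hset, hlaw i p.1 p.2,
      ENNReal.toReal_ofReal (mul_nonneg (μ0.2.1 p.1) ((h i p.1).2.1 p.2))]
  have hval' : ∀ (p : X × U) i, ∫ ω, B p i ω ∂P
      = μ0.1 p.1 * ((N:ℝ)⁻¹ * ∑ j, (h j p.1).1 p.2) := by
    intro p i
    rw [show (fun ω => B p i ω) = fun ω => if Z' i ω = p then (1:ℝ) else 0 from rfl,
      integral_indicator_eq P (Z' i) (hmeas' i) p]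
    have hset : {ω | Z' i ω = p} = {ω | Xr' i ω = p.1 ∧ Ur' i ω = p.2} := by
      ext ω; simp [hZ', Prod.ext_iff]
    rw [hset, hlaw' i p.1 p.2]
    refine ENNReal.toReal_ofReal (mul_nonneg (μ0.2.1 p.1) (mul_nonneg (by positivity) ?_))
    exact Finset.sum_nonneg fun j _ => (h j p.1).2.1 p.2
  -- equal means
  have hmeans : ∀ p : X × U,
      (N:ℝ)⁻¹ * ∑ i, ∫ ω, B p i ω ∂P = (N:ℝ)⁻¹ * ∑ i, ∫ ω, A p i ω ∂P := by
    intro p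
    rw [Finset.sum_congr rfl fun i _ => hval' p i,
      Finset.sum_congr rfl fun i _ => hval p i, Finset.sum_const, ← Finset.mul_sum]
    simp only [Finset.card_univ, Fintype.card_fin, nsmul_eq_mul]
    have hN0 : (N:ℝ) ≠ 0 := ne_of_gt hNpos
    field_simp
  -- second moment bounds
  have h01A : ∀ (p : X × U) i ω, A p i ω = 0 ∨ A p i ω = 1 := by
    intro p i ω; by_cases hc : Z i ω = p <;> simp [hA, hc]
  have h01B : ∀ (p : X × U) i ω, B p i ω = 0 ∨ B p i ω = 1 := by
    intro p i ω; by_cases hc : Z' i ω = p <;> simp [hB, hc]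
  have hAm : ∀ (p : X × U) i, Measurable (A p i) :=
    fun p i => (indicator_fn_measurable p).comp (hmeas i)
  have hBm : ∀ (p : X × U) i, Measurable (B p i) :=
    fun p i => (indicator_fn_measurable p).comp (hmeas' i)
  have hsqA : ∀ p : X × U,
      ∫ ω, ((N:ℝ)⁻¹ * ∑ i, A p i ω - (N:ℝ)⁻¹ * ∑ i, ∫ ω', A p i ω' ∂P) ^ 2 ∂P
        ≤ ((4:ℝ) * N)⁻¹ :=
    fun p => second_moment_bound P N hN (A p) (hAm p) (h01A p)
      (fun i j hij => indicator_indep_integral P N Z hmeas hindep p i j hij)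
  have hsqB : ∀ p : X × U,
      ∫ ω, ((N:ℝ)⁻¹ * ∑ i, B p i ω - (N:ℝ)⁻¹ * ∑ i, ∫ ω', B p i ω' ∂P) ^ 2 ∂P
        ≤ ((4:ℝ) * N)⁻¹ :=
    fun p => second_moment_bound P N hN (B p) (hBm p) (h01B p)
      (fun i j hij => indicator_indep_integral P N Z' hmeas' hindep' p i j hij)
  -- abbreviations
  set SA : (X × U) → Ω → ℝ := fun p ω => (N:ℝ)⁻¹ * ∑ i, A p i ω with hSA
  set SB : (X × U) → Ω → ℝ := fun p ω => (N:ℝ)⁻¹ * ∑ i, B p i ω with hSB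
  set m : (X × U) → ℝ := fun p => (N:ℝ)⁻¹ * ∑ i, ∫ ω', A p i ω' ∂P with hm
  have hAbd : ∀ (p : X × U) i ω, |A p i ω| ≤ 1 := by
    intro p i ω; rcases h01A p i ω with hc | hc <;> simp [hc]
  have hBbd : ∀ (p : X × U) i ω, |B p i ω| ≤ 1 := by
    intro p i ω; rcases h01B p i ω with hc | hc <;> simp [hc]
  have hSAbd : ∀ (p : X × U) ω, |SA p ω| ≤ 1 := fun p ω => avg_abs_le _ (fun i => hAbd p i ω)
  have hSBbd : ∀ (p : X × U) ω, |SB p ω| ≤ 1 := fun p ω => avg_abs_le _ (fun i => hBbd p i ω)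
  have hmbd : ∀ p : X × U, |m p| ≤ 1 := by
    intro p
    refine avg_abs_le _ fun i => ?_
    have := norm_integral_le_of_norm_le_const (μ := P) (f := A p i) (C := 1)
      (ae_of_all _ fun ω => by simpa [Real.norm_eq_abs] using hAbd p i ω)
    simpa [Real.norm_eq_abs] using this
  have hSAm : ∀ p : X × U, Measurable (SA p) := fun p =>
    (Finset.measurable_sum Finset.univ fun i _ => hAm p i).const_mul _
  have hSBm : ∀ p : X × U, Measurable (SB p) := fun p =>
    (Finset.measurable_sum Finset.univ fun i _ => hBm p i).const_mul _
  -- integrability of the centered squares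
  have hIntA2 : ∀ p : X × U, Integrable (fun ω => (SA p ω - m p) ^ 2) P := by
    intro p
    refine integrable_of_bdd (((hSAm p).sub measurable_const).pow_const 2) (C := 4) fun ω => ?_
    have hx : |SA p ω - m p| ≤ 2 := by
      have h1 := abs_le.1 (hSAbd p ω); have h2 := abs_le.1 (hmbd p)
      exact abs_le.2 ⟨by linarith [h1.1, h2.2], by linarith [h1.2, h2.1]⟩
    calc |(SA p ω - m p) ^ 2| = |SA p ω - m p| ^ 2 := by
          rw [abs_of_nonneg (sq_nonneg _), sq_abs]
      _ ≤ 2 ^ 2 := pow_le_pow_left₀ (abs_nonneg _) hx 2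
      _ = 4 := by norm_num
  have hIntB2 : ∀ p : X × U, Integrable (fun ω => (SB p ω - m p) ^ 2) P := by
    intro p
    refine integrable_of_bdd (((hSBm p).sub measurable_const).pow_const 2) (C := 4) fun ω => ?_
    have hx : |SB p ω - m p| ≤ 2 := by
      have h1 := abs_le.1 (hSBbd p ω); have h2 := abs_le.1 (hmbd p)
      exact abs_le.2 ⟨by linarith [h1.1, h2.2], by linarith [h1.2, h2.1]⟩
    calc |(SB p ω - m p) ^ 2| = |SB p ω - m p| ^ 2 := by
          rw [abs_of_nonneg (sq_nonneg _), sq_abs]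
      _ ≤ 2 ^ 2 := pow_le_pow_left₀ (abs_nonneg _) hx 2
      _ = 4 := by norm_num
  have hIntD2 : ∀ p : X × U, Integrable (fun ω => (SA p ω - SB p ω) ^ 2) P := by
    intro p
    refine integrable_of_bdd (((hSAm p).sub (hSBm p)).pow_const 2) (C := 4) fun ω => ?_
    have hx : |SA p ω - SB p ω| ≤ 2 := by
      have h1 := abs_le.1 (hSAbd p ω); have h2 := abs_le.1 (hSBbd p ω)
      exact abs_le.2 ⟨by linarith [h1.1, h2.2], by linarith [h1.2, h2.1]⟩
    calc |(SA p ω - SB p ω) ^ 2| = |SA p ω - SB p ω| ^ 2 := by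
          rw [abs_of_nonneg (sq_nonneg _), sq_abs]
      _ ≤ 2 ^ 2 := pow_le_pow_left₀ (abs_nonneg _) hx 2
      _ = 4 := by norm_num
  -- second moment of the difference
  have hsqBm : ∀ p : X × U,
      ∫ ω, (SB p ω - m p) ^ 2 ∂P ≤ ((4:ℝ) * N)⁻¹ := by
    intro p
    have := hsqB p
    rw [hmeans p] at this
    exact this
  have hD2 : ∀ p : X × U, ∫ ω, (SA p ω - SB p ω) ^ 2 ∂P ≤ (N:ℝ)⁻¹ := by
    intro p
    have hpt : ∀ ω, (SA p ω - SB p ω) ^ 2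
        ≤ 2 * (SA p ω - m p) ^ 2 + 2 * (SB p ω - m p) ^ 2 := by
      intro ω; nlinarith [sq_nonneg ((SA p ω - m p) + (SB p ω - m p))]
    calc ∫ ω, (SA p ω - SB p ω) ^ 2 ∂P
        ≤ ∫ ω, (2 * (SA p ω - m p) ^ 2 + 2 * (SB p ω - m p) ^ 2) ∂P := by
          exact integral_mono (hIntD2 p)
            (((hIntA2 p).const_mul 2).add ((hIntB2 p).const_mul 2)) hpt
      _ = 2 * ∫ ω, (SA p ω - m p) ^ 2 ∂P + 2 * ∫ ω, (SB p ω - m p) ^ 2 ∂P := by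
          rw [integral_add ((hIntA2 p).const_mul 2) ((hIntB2 p).const_mul 2),
            integral_const_mul, integral_const_mul]
      _ ≤ 2 * ((4:ℝ) * N)⁻¹ + 2 * ((4:ℝ) * N)⁻¹ := by
          have h1 := hsqA p
          have h2 := hsqBm p
          gcongr
      _ = (N:ℝ)⁻¹ := by rw [mul_inv]; ring
  -- Cauchy–Schwarz pointwise
  set c : ℝ := (Fintype.card (X × U) : ℝ) with hc
  have hc0 : 0 ≤ c := by positivity
  have hCS : ∀ ω, (∑ p : X × U, |SA p ω - SB p ω|) ^ 2
      ≤ c * ∑ p : X × U, (SA p ω - SB p ω) ^ 2 := by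
    intro ω
    have := sq_sum_le_card_mul_sum_sq (s := Finset.univ)
      (f := fun p : X × U => |SA p ω - SB p ω|)
    simpa [sq_abs, Finset.card_univ, hc] using this
  -- integrability of the final quantities
  have hfM : Measurable (fun ω => (∑ p : X × U, |SA p ω - SB p ω|) ^ 2) :=
    (Finset.measurable_sum Finset.univ fun p _ => ((hSAm p).sub (hSBm p)).abs).pow_const 2
  have hIntf2 : Integrable (fun ω => (∑ p : X × U, |SA p ω - SB p ω|) ^ 2) P := by
    refine integrable_of_bdd hfM (C := (2 * c) ^ 2) fun ω => ?_
    have hb : (∑ p : X × U, |SA p ω - SB p ω|) ≤ 2 * c := by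
      calc ∑ p : X × U, |SA p ω - SB p ω| ≤ ∑ _p : X × U, (2:ℝ) := by
            refine Finset.sum_le_sum fun p _ => ?_
            have h1 := abs_le.1 (hSAbd p ω); have h2 := abs_le.1 (hSBbd p ω)
            exact abs_le.2 ⟨by linarith [h1.1, h2.2], by linarith [h1.2, h2.1]⟩
        _ = 2 * c := by simp [hc, mul_comm]
    have hb0 : (0:ℝ) ≤ ∑ p : X × U, |SA p ω - SB p ω| :=
      Finset.sum_nonneg fun p _ => abs_nonneg _
    calc |(∑ p : X × U, |SA p ω - SB p ω|) ^ 2|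
        = (∑ p : X × U, |SA p ω - SB p ω|) ^ 2 := abs_of_nonneg (sq_nonneg _)
      _ ≤ (2 * c) ^ 2 := pow_le_pow_left₀ hb0 hb 2
  have hIntsum : Integrable (fun ω => ∑ p : X × U, (SA p ω - SB p ω) ^ 2) P :=
    integrable_finset_sum _ fun p _ => hIntD2 p
  -- integral bound
  have hIbound : ∫ ω, (∑ p : X × U, |SA p ω - SB p ω|) ^ 2 ∂P ≤ c * (c * (N:ℝ)⁻¹) := by
    calc ∫ ω, (∑ p : X × U, |SA p ω - SB p ω|) ^ 2 ∂P
        ≤ ∫ ω, c * ∑ p : X × U, (SA p ω - SB p ω) ^ 2 ∂P :=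
          integral_mono hIntf2 (hIntsum.const_mul c) hCS
      _ = c * ∑ p : X × U, ∫ ω, (SA p ω - SB p ω) ^ 2 ∂P := by
          rw [integral_const_mul, integral_finset_sum _ fun p _ => hIntD2 p]
      _ ≤ c * (c * (N:ℝ)⁻¹) := by
          refine mul_le_mul_of_nonneg_left ?_ hc0
          calc ∑ p : X × U, ∫ ω, (SA p ω - SB p ω) ^ 2 ∂P
              ≤ ∑ _p : X × U, (N:ℝ)⁻¹ := Finset.sum_le_sum fun p _ => hD2 p
            _ = c * (N:ℝ)⁻¹ := by simp [hc, mul_comm]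
  -- Markov
  have hMarkov := mul_meas_ge_le_integral_of_nonneg (μ := P)
    (f := fun ω => (∑ p : X × U, |SA p ω - SB p ω|) ^ 2)
    (ae_of_all _ fun ω => sq_nonneg _) hIntf2 (ε ^ 2)
  have hsubset : {ω | ε ≤ ∑ p : X × U, |SA p ω - SB p ω|}
      ⊆ {ω | ε ^ 2 ≤ (∑ p : X × U, |SA p ω - SB p ω|) ^ 2} :=
    fun ω hω => pow_le_pow_left₀ hε.le hω 2
  have htR : (P {ω | ε ^ 2 ≤ (∑ p : X × U, |SA p ω - SB p ω|) ^ 2}).toReal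
      ≤ c * (c * (N:ℝ)⁻¹) / ε ^ 2 := by
    rw [le_div_iff₀ (by positivity)]
    calc (P {ω | ε ^ 2 ≤ (∑ p : X × U, |SA p ω - SB p ω|) ^ 2}).toReal * ε ^ 2
        = ε ^ 2 * (P {ω | ε ^ 2 ≤ (∑ p : X × U, |SA p ω - SB p ω|) ^ 2}).toReal := by ring
      _ ≤ ∫ ω, (∑ p : X × U, |SA p ω - SB p ω|) ^ 2 ∂P := hMarkov
      _ ≤ c * (c * (N:ℝ)⁻¹) := hIbound
  have hgoal : {ω | ε ≤ ∑ p : X × U,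
      |empMeasure N Xr Ur ω p - empMeasure N Xr' Ur' ω p|}
      = {ω | ε ≤ ∑ p : X × U, |SA p ω - SB p ω|} := rfl
  rw [hgoal]
  calc P {ω | ε ≤ ∑ p : X × U, |SA p ω - SB p ω|}
      ≤ P {ω | ε ^ 2 ≤ (∑ p : X × U, |SA p ω - SB p ω|) ^ 2} := measure_mono hsubset
    _ = ENNReal.ofReal ((P {ω | ε ^ 2 ≤ (∑ p : X × U, |SA p ω - SB p ω|) ^ 2}).toReal) :=
        (ENNReal.ofReal_toReal (measure_ne_top P _)).symm
    _ ≤ ENNReal.ofReal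
        ((Fintype.card X : ℝ) ^ 2 * (Fintype.card U : ℝ) ^ 2 / (ε ^ 2 * N)) := by
        refine ENNReal.ofReal_le_ofReal (htR.trans (le_of_eq ?_))
        rw [hc, Fintype.card_prod]
        push_cast
        field_simp
end

section
/- Under the continuity assumption on r and P^0, the N-agent objective converges to the mean-field objective uniformly over all mean-field policies: lim_{N→∞} sup_{π∈Π} |J^N(π^N(π)) − J(π)| = 0. -/
open Finset Filter Topology

section MFC

variable {X U X0 : Type*} [Fintype X] [Fintype U] [Fintype X0]

/-- The state-action distribution `G(μ,h)(x,u) = h(x)(u)·μ(x)` induced by a state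
distribution `μ` and a decision rule `h ∈ 𝓗 = {h : X → 𝒫(U)}`. -/
noncomputable def jointG (μ : ↥(stdSimplex ℝ X)) (h : X → ↥(stdSimplex ℝ U)) :
    ↥(stdSimplex ℝ (X × U)) :=
  ⟨fun p => (h p.1).1 p.2 * μ.1 p.1,
   ⟨fun p => mul_nonneg ((h p.1).2.1 p.2) (μ.2.1 p.1), by
    calc ∑ p : X × U, (h p.1).1 p.2 * μ.1 p.1
        = ∑ x : X, ∑ u : U, (h x).1 u * μ.1 x := by rw [Fintype.sum_prod_type]
      _ = ∑ x : X, (∑ u : U, (h x).1 u) * μ.1 x := by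
          simp [Finset.sum_mul]
      _ = 1 := by
          simp only [fun x : X => (h x).2.2, one_mul]
          exact μ.2.2⟩⟩

/-- The (deterministic) empirical state-action distribution of the `N+1` sampled
state-action pairs `s i ∈ X × U`. -/
noncomputable def empDist [DecidableEq X] [DecidableEq U] (N : ℕ) (s : Fin (N + 1) → X × U) :
    ↥(stdSimplex ℝ (X × U)) :=
  ⟨fun p => (∑ i, if s i = p then (1 : ℝ) else 0) / (N + 1),
   ⟨fun p => div_nonneg (Finset.sum_nonneg fun i _ => by positivity) (by positivity), by
    rw [← Finset.sum_div, Finset.sum_comm]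
    simp only [Finset.sum_ite_eq, Finset.mem_univ, if_true, Finset.sum_const,
      Finset.card_univ, Fintype.card_fin, nsmul_eq_mul, mul_one]
    rw [Nat.cast_add, Nat.cast_one, div_self (by positivity)]⟩⟩

/-- The probability that the `N+1` agents, with states drawn i.i.d. from `μ0` and actions
drawn conditionally independently from the decision rules `d i`, sample exactly the
state-action pairs `s i`. -/
noncomputable def sampleWeight (N : ℕ) (μ0 : ↥(stdSimplex ℝ X))
    (d : Fin (N + 1) → X → ↥(stdSimplex ℝ U)) (s : Fin (N + 1) → X × U) : ℝ :=
  ∏ i, μ0.1 (s i).1 * (d i (s i).1).1 (s i).2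

/-- The expectation `E[f(𝔾^N)]` of a function `f` of the random empirical state-action
distribution `𝔾^N ~ 𝒢^N(μ0, (d¹,…,d^{N+1}))`. -/
noncomputable def empExp [DecidableEq X] [DecidableEq U] (N : ℕ) (μ0 : ↥(stdSimplex ℝ X))
    (d : Fin (N + 1) → X → ↥(stdSimplex ℝ U))
    (f : ↥(stdSimplex ℝ (X × U)) → ℝ) : ℝ :=
  ∑ s : Fin (N + 1) → X × U, sampleWeight N μ0 d s * f (empDist N s)

/-- The law of the environment state `x^{0,N}_t` of the `(N+1)`-agent system under the
policy tuple `πv`, with agent states resampled i.i.d. from `μ0` at every step. -/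
noncomputable def envLawN [DecidableEq X] [DecidableEq U] (N : ℕ) (μ0 : ↥(stdSimplex ℝ X))
    (μ00 : ↥(stdSimplex ℝ X0))
    (P0 : X0 → ↥(stdSimplex ℝ (X × U)) → ↥(stdSimplex ℝ X0))
    (πv : Fin (N + 1) → ℕ → X0 → X → ↥(stdSimplex ℝ U)) : ℕ → X0 → ℝ
  | 0 => fun y => μ00.1 y
  | t + 1 => fun y => ∑ x0 : X0, envLawN N μ0 μ00 P0 πv t x0 *
      empExp N μ0 (fun i => πv i t x0) (fun G => (P0 x0 G).1 y)

/-- The `(N+1)`-agent objective `J^N(π¹,…,π^{N+1}) = E[∑ₜ γᵗ r(x^{0,N}_t, 𝔾^N_t)]`. -/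
noncomputable def JN [DecidableEq X] [DecidableEq U] (N : ℕ) (μ0 : ↥(stdSimplex ℝ X))
    (μ00 : ↥(stdSimplex ℝ X0))
    (P0 : X0 → ↥(stdSimplex ℝ (X × U)) → ↥(stdSimplex ℝ X0))
    (r : X0 → ↥(stdSimplex ℝ (X × U)) → ℝ) (γ : ℝ)
    (πv : Fin (N + 1) → ℕ → X0 → X → ↥(stdSimplex ℝ U)) : ℝ :=
  ∑' t : ℕ, γ ^ t * ∑ x0 : X0, envLawN N μ0 μ00 P0 πv t x0 *
      empExp N μ0 (fun i => πv i t x0) (fun G => r x0 G)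

/-- The law of the mean-field environment state `x^0_t` under the mean-field policy `π`. -/
noncomputable def envLawMF (μ0 : ↥(stdSimplex ℝ X)) (μ00 : ↥(stdSimplex ℝ X0))
    (P0 : X0 → ↥(stdSimplex ℝ (X × U)) → ↥(stdSimplex ℝ X0))
    (π : ℕ → X0 → X → ↥(stdSimplex ℝ U)) : ℕ → X0 → ℝ
  | 0 => fun y => μ00.1 y
  | t + 1 => fun y => ∑ x0 : X0, envLawMF μ0 μ00 P0 π t x0 *
      (P0 x0 (jointG μ0 (π t x0))).1 y

/-- The mean-field objective `J(π) = E[∑ₜ γᵗ r(x^0_t, G(μ0, π_t(x^0_t)))]`. -/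
noncomputable def JMF (μ0 : ↥(stdSimplex ℝ X)) (μ00 : ↥(stdSimplex ℝ X0))
    (P0 : X0 → ↥(stdSimplex ℝ (X × U)) → ↥(stdSimplex ℝ X0))
    (r : X0 → ↥(stdSimplex ℝ (X × U)) → ℝ) (γ : ℝ)
    (π : ℕ → X0 → X → ↥(stdSimplex ℝ U)) : ℝ :=
  ∑' t : ℕ, γ ^ t * ∑ x0 : X0, envLawMF μ0 μ00 P0 π t x0 * r x0 (jointG μ0 (π t x0))

end MFC

namespace MFCaux
set_option linter.unusedSectionVars false

open Finset

variable {X U X0 : Type*} [Fintype X] [Fintype U] [Fintype X0]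
  [DecidableEq X] [DecidableEq U]

lemma sum_prod_eq {n : ℕ} {A : Type*} [Fintype A] (g : Fin n → A → ℝ) :
    ∑ s : Fin n → A, ∏ i, g i (s i) = ∏ i, ∑ a, g i a := by
  rw [Finset.prod_univ_sum]
  rw [Fintype.piFinset_univ]

lemma jointG_apply (μ0 : ↥(stdSimplex ℝ X)) (h : X → ↥(stdSimplex ℝ U)) (p : X × U) :
    (jointG μ0 h).1 p = μ0.1 p.1 * (h p.1).1 p.2 := mul_comm _ _

lemma sum_w_one (μ0 : ↥(stdSimplex ℝ X)) (h : X → ↥(stdSimplex ℝ U)) :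
    ∑ p : X × U, μ0.1 p.1 * (h p.1).1 p.2 = 1 := by
  rw [Fintype.sum_prod_type]
  have : ∀ x : X, ∑ u : U, μ0.1 x * (h x).1 u = μ0.1 x := by
    intro x
    rw [← Finset.mul_sum, (h x).2.2, mul_one]
  simp only [this]
  exact μ0.2.2

lemma sampleWeight_nonneg (N : ℕ) (μ0 : ↥(stdSimplex ℝ X))
    (d : Fin (N + 1) → X → ↥(stdSimplex ℝ U)) (s : Fin (N + 1) → X × U) :
    0 ≤ sampleWeight N μ0 d s :=
  Finset.prod_nonneg fun i _ => mul_nonneg (μ0.2.1 _) ((d i _).2.1 _)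

lemma sum_sampleWeight (N : ℕ) (μ0 : ↥(stdSimplex ℝ X))
    (d : Fin (N + 1) → X → ↥(stdSimplex ℝ U)) :
    ∑ s : Fin (N + 1) → X × U, sampleWeight N μ0 d s = 1 := by
  unfold sampleWeight
  exact (sum_prod_eq (fun i (a : X × U) => μ0.1 a.1 * (d i a.1).1 a.2)).trans
    (by simp only [sum_w_one, Finset.prod_const_one])

lemma empExp_const (N : ℕ) (μ0 : ↥(stdSimplex ℝ X))
    (d : Fin (N + 1) → X → ↥(stdSimplex ℝ U)) (c : ℝ) :
    empExp N μ0 d (fun _ => c) = c := by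
  unfold empExp
  rw [← Finset.sum_mul, sum_sampleWeight, one_mul]

lemma empExp_nonneg (N : ℕ) (μ0 : ↥(stdSimplex ℝ X))
    (d : Fin (N + 1) → X → ↥(stdSimplex ℝ U)) {f : ↥(stdSimplex ℝ (X × U)) → ℝ}
    (hf : ∀ G, 0 ≤ f G) : 0 ≤ empExp N μ0 d f :=
  Finset.sum_nonneg fun s _ => mul_nonneg (sampleWeight_nonneg N μ0 d s) (hf _)

lemma abs_empExp_le (N : ℕ) (μ0 : ↥(stdSimplex ℝ X))
    (d : Fin (N + 1) → X → ↥(stdSimplex ℝ U)) {f : ↥(stdSimplex ℝ (X × U)) → ℝ} {C : ℝ}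
    (hf : ∀ G, |f G| ≤ C) : |empExp N μ0 d f| ≤ C := by
  calc |empExp N μ0 d f| ≤ ∑ s : Fin (N + 1) → X × U, |sampleWeight N μ0 d s * f (empDist N s)| :=
        Finset.abs_sum_le_sum_abs _ _
    _ ≤ ∑ s : Fin (N + 1) → X × U, sampleWeight N μ0 d s * C := by
        refine Finset.sum_le_sum fun s _ => ?_
        rw [abs_mul, abs_of_nonneg (sampleWeight_nonneg N μ0 d s)]
        exact mul_le_mul_of_nonneg_left (hf _) (sampleWeight_nonneg N μ0 d s)
    _ = C := by rw [← Finset.sum_mul, sum_sampleWeight, one_mul]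

lemma empExp_sum {Y : Type*} [Fintype Y] (N : ℕ) (μ0 : ↥(stdSimplex ℝ X))
    (d : Fin (N + 1) → X → ↥(stdSimplex ℝ U)) (F : Y → ↥(stdSimplex ℝ (X × U)) → ℝ) :
    empExp N μ0 d (fun G => ∑ y : Y, F y G) = ∑ y : Y, empExp N μ0 d (F y) := by
  unfold empExp
  rw [Finset.sum_comm]
  simp only [Finset.mul_sum]

lemma empExp_sub (N : ℕ) (μ0 : ↥(stdSimplex ℝ X))
    (d : Fin (N + 1) → X → ↥(stdSimplex ℝ U)) (f g : ↥(stdSimplex ℝ (X × U)) → ℝ) :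
    empExp N μ0 d (fun G => f G - g G) = empExp N μ0 d f - empExp N μ0 d g := by
  unfold empExp
  rw [← Finset.sum_sub_distrib]
  simp only [mul_sub]

end MFCaux

namespace MFCaux
set_option linter.unusedSectionVars false

variable {X U X0 : Type*} [Fintype X] [Fintype U] [Fintype X0]
  [DecidableEq X] [DecidableEq U]

lemma empDist_apply (N : ℕ) (s : Fin (N + 1) → X × U) (p : X × U) :
    (empDist N s).1 p = (∑ i, if s i = p then (1 : ℝ) else 0) / (N + 1) := rfl

set_option maxHeartbeats 1000000 in
/-- Variance bound: `E[(𝔾^N(p) - ν(p))²] ≤ 1/(N+1)` for i.i.d. samples. -/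
lemma var_le (N : ℕ) (μ0 : ↥(stdSimplex ℝ X)) (h : X → ↥(stdSimplex ℝ U)) (p : X × U) :
    ∑ s : Fin (N + 1) → X × U,
      sampleWeight N μ0 (fun _ => h) s * ((empDist N s).1 p - (jointG μ0 h).1 p) ^ 2
      ≤ 1 / (N + 1) := by
  set c : ℝ := (jointG μ0 h).1 p with hc
  set wf : X × U → ℝ := fun q => μ0.1 q.1 * (h q.1).1 q.2 with hwf
  have hwfp : wf p = c := (jointG_apply μ0 h p).symm
  have hwnn : ∀ q, 0 ≤ wf q := fun q => mul_nonneg (μ0.2.1 _) ((h q.1).2.1 _)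
  have hwsum : ∑ q, wf q = 1 := sum_w_one μ0 h
  have hc0 : 0 ≤ c := by rw [← hwfp]; exact hwnn p
  have hc1 : c ≤ 1 := by
    rw [← hwfp, ← hwsum]
    exact Finset.single_le_sum (fun q _ => hwnn q) (Finset.mem_univ p)
  set Z : X × U → ℝ := fun a => (if a = p then (1 : ℝ) else 0) - c with hZ
  have hZ1 : ∀ a, |Z a| ≤ 1 := by
    intro a
    rw [abs_sub_le_iff]
    constructor <;> [skip; skip] <;> by_cases hap : a = p <;> simp [hZ, hap] <;> linarith
  have hZ0 : ∑ a, wf a * Z a = 0 := by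
    simp only [hZ, mul_sub, Finset.sum_sub_distrib, mul_ite, mul_one, mul_zero,
      Finset.sum_ite_eq', Finset.mem_univ, if_true, ← Finset.sum_mul, hwsum, one_mul, hwfp,
      sub_self]
  have hNpos : (0 : ℝ) < (N : ℝ) + 1 := by positivity
  -- rewrite the deviation
  have key : ∀ s : Fin (N + 1) → X × U,
      (empDist N s).1 p - c = (∑ i, Z (s i)) / ((N : ℝ) + 1) := by
    intro s
    rw [empDist_apply, eq_div_iff (ne_of_gt hNpos)]
    simp only [hZ, Finset.sum_sub_distrib, Finset.sum_const, Finset.card_univ,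
      Fintype.card_fin, nsmul_eq_mul]
    rw [sub_mul, div_mul_cancel₀ _ (ne_of_gt hNpos)]
    push_cast
    ring
  -- expectation of pairwise products
  set T : Fin (N + 1) → Fin (N + 1) → ℝ := fun i j =>
    ∑ s : Fin (N + 1) → X × U, sampleWeight N μ0 (fun _ => h) s * (Z (s i) * Z (s j)) with hT
  have hTfac : ∀ i j, T i j =
      ∏ k, ∑ a, wf a * (if k = i then Z a else 1) * (if k = j then Z a else 1) := by
    intro i j
    have hsummand : ∀ s : Fin (N + 1) → X × U,
        sampleWeight N μ0 (fun _ => h) s * (Z (s i) * Z (s j)) =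
        ∏ k, (fun k (a : X × U) => wf a * (if k = i then Z a else 1) *
          (if k = j then Z a else 1)) k (s k) := by
      intro s
      simp only []
      rw [Finset.prod_mul_distrib, Finset.prod_mul_distrib]
      have h1 : ∏ k, (if k = i then Z (s k) else 1) = Z (s i) := by
        rw [Finset.prod_ite_eq']; simp
      have h2 : ∏ k, (if k = j then Z (s k) else 1) = Z (s j) := by
        rw [Finset.prod_ite_eq']; simp
      rw [h1, h2]
      unfold sampleWeight
      ring
    rw [hT]
    calc (∑ s : Fin (N + 1) → X × U, sampleWeight N μ0 (fun _ => h) s * (Z (s i) * Z (s j)))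
        = ∑ s : Fin (N + 1) → X × U, ∏ k, (fun k (a : X × U) => wf a *
            (if k = i then Z a else 1) * (if k = j then Z a else 1)) k (s k) :=
          Finset.sum_congr rfl fun s _ => hsummand s
      _ = ∏ k, ∑ a, wf a * (if k = i then Z a else 1) * (if k = j then Z a else 1) :=
          sum_prod_eq (fun k (a : X × U) => wf a * (if k = i then Z a else 1) *
            (if k = j then Z a else 1))
  have hToff : ∀ i j, i ≠ j → T i j = 0 := by
    intro i j hij
    rw [hTfac i j]
    refine Finset.prod_eq_zero (Finset.mem_univ i) ?_
    simp only [if_pos rfl, if_neg hij]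
    simpa only [mul_one, if_true] using hZ0
  have hTdiag : ∀ i : Fin (N + 1), T i i ≤ 1 := by
    intro i
    rw [hTfac i i]
    refine Finset.prod_le_one (fun k _ => ?_) (fun k _ => ?_)
    · refine Finset.sum_nonneg fun a _ => ?_
      by_cases hk : k = i
      · simp only [hk, if_pos rfl]
        rw [mul_assoc]
        exact mul_nonneg (hwnn a) (mul_self_nonneg _)
      · simp only [if_neg hk, mul_one]
        exact hwnn a
    · by_cases hk : k = i
      · simp only [hk, if_pos rfl]
        calc ∑ a, wf a * Z a * Z a ≤ ∑ a, wf a := by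
              refine Finset.sum_le_sum fun a _ => ?_
              rw [mul_assoc]
              calc wf a * (Z a * Z a) ≤ wf a * 1 := by
                    refine mul_le_mul_of_nonneg_left ?_ (hwnn a)
                    calc Z a * Z a = |Z a| * |Z a| := (abs_mul_abs_self _).symm
                      _ ≤ 1 * 1 := mul_le_mul (hZ1 a) (hZ1 a) (abs_nonneg _) zero_le_one
                      _ = 1 := one_mul 1
                _ = wf a := mul_one _
          _ = 1 := hwsum
      · simp only [if_neg hk, mul_one, hwsum, le_refl]
  -- put it together
  have expand : ∑ s : Fin (N + 1) → X × U,
      sampleWeight N μ0 (fun _ => h) s * ((empDist N s).1 p - c) ^ 2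
      = (∑ i, ∑ j, T i j) / ((N : ℝ) + 1) ^ 2 := by
    have hs : ∀ s : Fin (N + 1) → X × U,
        sampleWeight N μ0 (fun _ => h) s * ((empDist N s).1 p - c) ^ 2
        = (∑ i, ∑ j, sampleWeight N μ0 (fun _ => h) s * (Z (s i) * Z (s j))) /
            ((N : ℝ) + 1) ^ 2 := by
      intro s
      rw [key s, div_pow, sq, Finset.sum_mul_sum]
      rw [mul_div_assoc']
      congr 1
      rw [Finset.mul_sum]
      refine Finset.sum_congr rfl fun i _ => ?_
      rw [Finset.mul_sum]
    rw [Finset.sum_congr rfl fun s _ => hs s, ← Finset.sum_div]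
    congr 1
    rw [Finset.sum_comm]
    refine Finset.sum_congr rfl fun i _ => Finset.sum_comm
  rw [expand]
  have hsumT : ∑ i, ∑ j, T i j ≤ (N : ℝ) + 1 := by
    have : ∀ i : Fin (N + 1), ∑ j, T i j ≤ 1 := by
      intro i
      rw [Finset.sum_eq_single i (fun j _ hji => hToff i j (Ne.symm hji)) (by simp)]
      exact hTdiag i
    calc ∑ i, ∑ j, T i j ≤ ∑ _i : Fin (N + 1), (1 : ℝ) := Finset.sum_le_sum fun i _ => this i
      _ = (N : ℝ) + 1 := by simp
  calc (∑ i, ∑ j, T i j) / ((N : ℝ) + 1) ^ 2 ≤ ((N : ℝ) + 1) / ((N : ℝ) + 1) ^ 2 := by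
        gcongr
    _ = 1 / ((N : ℝ) + 1) := by
        rw [sq, div_mul_eq_div_div, div_self (ne_of_gt hNpos)]

end MFCaux

namespace MFCaux
set_option linter.unusedSectionVars false

variable {X U X0 : Type*} [Fintype X] [Fintype U] [Fintype X0]
  [DecidableEq X] [DecidableEq U]

/-- Core uniform LLN: `E[f(𝔾^N)] → f(G(μ0,h))` uniformly in the decision rule `h`. -/
lemma core (μ0 : ↥(stdSimplex ℝ X)) {f : ↥(stdSimplex ℝ (X × U)) → ℝ}
    (hf : Continuous f) {ε : ℝ} (hε : 0 < ε) :
    ∀ᶠ N : ℕ in Filter.atTop, ∀ h : X → ↥(stdSimplex ℝ U),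
      |empExp N μ0 (fun _ => h) f - f (jointG μ0 h)| ≤ ε := by
  haveI : CompactSpace ↥(stdSimplex ℝ (X × U)) :=
    isCompact_iff_compactSpace.mp (isCompact_stdSimplex _ _)
  obtain ⟨C0, hC0⟩ := (isCompact_univ (X := ↥(stdSimplex ℝ (X × U)))).exists_bound_of_continuousOn
    hf.continuousOn
  set C : ℝ := max C0 0 with hCdef
  have hC : ∀ G, |f G| ≤ C := fun G =>
    le_trans (le_trans (Real.norm_eq_abs _ ▸ le_refl _) (hC0 G (Set.mem_univ G))) (le_max_left _ _)
  have hCnn : 0 ≤ C := le_max_right _ _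
  obtain ⟨δ, hδpos, hδ⟩ := Metric.uniformContinuous_iff.mp
    (CompactSpace.uniformContinuous_of_continuous hf) (ε / 2) (half_pos hε)
  set K : ℝ := (Fintype.card (X × U) : ℝ) with hK
  have hKnn : (0 : ℝ) ≤ K := Nat.cast_nonneg _
  set B : ℝ := 8 * C * K / δ ^ 2 with hB
  have hBnn : 0 ≤ B := by positivity
  -- pointwise bound
  have pt : ∀ (N : ℕ) (s : Fin (N + 1) → X × U) (h : X → ↥(stdSimplex ℝ U)),
      |f (empDist N s) - f (jointG μ0 h)| ≤
        ε / 2 + B * ∑ p, ((empDist N s).1 p - (jointG μ0 h).1 p) ^ 2 := by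
    intro N s h
    set G := empDist N s
    set ν := jointG μ0 h
    set S2 : ℝ := ∑ p, (G.1 p - ν.1 p) ^ 2 with hS2
    have hS2nn : 0 ≤ S2 := Finset.sum_nonneg fun p _ => sq_nonneg _
    by_cases hcase : ∑ p, |G.1 p - ν.1 p| ≤ δ / 2
    · have hdist : dist G ν < δ := by
        have : dist G ν ≤ δ / 2 := by
          rw [Subtype.dist_eq]
          rw [dist_pi_le_iff (by linarith)]
          intro p
          rw [Real.dist_eq]
          exact le_trans (Finset.single_le_sum (f := fun q => |G.1 q - ν.1 q|)
            (fun q _ => abs_nonneg _) (Finset.mem_univ p)) hcase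
        linarith
      have := le_of_lt (hδ hdist)
      rw [Real.dist_eq] at this
      have : |f G - f ν| ≤ ε / 2 := this
      nlinarith [mul_nonneg hBnn hS2nn]
    · push_neg at hcase
      have hsq : (δ / 2) ^ 2 < (∑ p, |G.1 p - ν.1 p|) ^ 2 := by
        apply pow_lt_pow_left₀ hcase (by linarith)
        norm_num
      have hcs : (∑ p, |G.1 p - ν.1 p|) ^ 2 ≤ K * S2 := by
        rw [hK, hS2]
        calc (∑ p, |G.1 p - ν.1 p|) ^ 2
            ≤ ((Finset.univ : Finset (X × U)).card : ℝ) * ∑ p, |G.1 p - ν.1 p| ^ 2 :=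
              sq_sum_le_card_mul_sum_sq
          _ = (Fintype.card (X × U) : ℝ) * ∑ p, (G.1 p - ν.1 p) ^ 2 := by
              rw [Finset.card_univ]
              simp [sq_abs]
      have h1 : δ ^ 2 < 4 * K * S2 := by nlinarith
      have h2C : |f G - f ν| ≤ 2 * C :=
        le_trans (abs_sub _ _) (by linarith [hC G, hC ν])
      have : 2 * C ≤ B * S2 := by
        rw [hB]
        rw [div_mul_eq_mul_div, le_div_iff₀ (by positivity)]
        nlinarith
      linarith
  -- expectation bound
  have exp_bound : ∀ (N : ℕ) (h : X → ↥(stdSimplex ℝ U)),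
      |empExp N μ0 (fun _ => h) f - f (jointG μ0 h)| ≤ ε / 2 + B * K * (1 / (N + 1)) := by
    intro N h
    have hrepr : empExp N μ0 (fun _ => h) f - f (jointG μ0 h) =
        ∑ s : Fin (N + 1) → X × U, sampleWeight N μ0 (fun _ => h) s *
          (f (empDist N s) - f (jointG μ0 h)) := by
      simp only [mul_sub, Finset.sum_sub_distrib, ← Finset.sum_mul, sum_sampleWeight, one_mul]
      rfl
    rw [hrepr]
    calc |∑ s : Fin (N + 1) → X × U, sampleWeight N μ0 (fun _ => h) s *
            (f (empDist N s) - f (jointG μ0 h))|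
        ≤ ∑ s : Fin (N + 1) → X × U, sampleWeight N μ0 (fun _ => h) s *
            (ε / 2 + B * ∑ p, ((empDist N s).1 p - (jointG μ0 h).1 p) ^ 2) := by
          refine le_trans (Finset.abs_sum_le_sum_abs _ _) (Finset.sum_le_sum fun s _ => ?_)
          rw [abs_mul, abs_of_nonneg (sampleWeight_nonneg N μ0 _ s)]
          exact mul_le_mul_of_nonneg_left (pt N s h) (sampleWeight_nonneg N μ0 _ s)
      _ = ε / 2 + B * ∑ p, ∑ s : Fin (N + 1) → X × U, sampleWeight N μ0 (fun _ => h) s *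
            ((empDist N s).1 p - (jointG μ0 h).1 p) ^ 2 := by
          simp only [mul_add, Finset.sum_add_distrib, ← Finset.sum_mul, sum_sampleWeight, one_mul]
          congr 1
          calc ∑ s : Fin (N + 1) → X × U, sampleWeight N μ0 (fun _ => h) s *
                  (B * ∑ p, ((empDist N s).1 p - (jointG μ0 h).1 p) ^ 2)
              = ∑ s : Fin (N + 1) → X × U, ∑ p, B * (sampleWeight N μ0 (fun _ => h) s *
                  ((empDist N s).1 p - (jointG μ0 h).1 p) ^ 2) := by
                refine Finset.sum_congr rfl fun s _ => ?_
                rw [Finset.mul_sum, Finset.mul_sum]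
                exact Finset.sum_congr rfl fun p _ => by ring
            _ = ∑ p, ∑ s : Fin (N + 1) → X × U, B * (sampleWeight N μ0 (fun _ => h) s *
                  ((empDist N s).1 p - (jointG μ0 h).1 p) ^ 2) := Finset.sum_comm
            _ = B * ∑ p, ∑ s : Fin (N + 1) → X × U, sampleWeight N μ0 (fun _ => h) s *
                  ((empDist N s).1 p - (jointG μ0 h).1 p) ^ 2 := by
                rw [Finset.mul_sum]
                exact Finset.sum_congr rfl fun p _ => (Finset.mul_sum _ _ _).symm
      _ ≤ ε / 2 + B * ∑ _p : X × U, 1 / ((N : ℝ) + 1) := by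
          refine add_le_add le_rfl (mul_le_mul_of_nonneg_left
            (Finset.sum_le_sum fun p _ => ?_) hBnn)
          exact var_le N μ0 h p
      _ = ε / 2 + B * K * (1 / (N + 1)) := by
          rw [Finset.sum_const, Finset.card_univ, nsmul_eq_mul]
          rw [hK, mul_assoc]
  have hlim : Filter.Tendsto (fun N : ℕ => ε / 2 + B * K * (1 / ((N : ℝ) + 1)))
      Filter.atTop (𝓝 (ε / 2 + B * K * 0)) :=
    Filter.Tendsto.add tendsto_const_nhds
      (tendsto_one_div_add_atTop_nhds_zero_nat.const_mul _)
  have : ∀ᶠ N : ℕ in Filter.atTop, ε / 2 + B * K * (1 / ((N : ℝ) + 1)) ≤ ε := by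
    have hlt : ε / 2 + B * K * 0 < ε := by linarith
    filter_upwards [hlim.eventually_lt_const hlt] with N hN using le_of_lt hN
  filter_upwards [this] with N hN h using le_trans (exp_bound N h) hN

end MFCaux

namespace MFCaux
set_option linter.unusedSectionVars false

variable {X U X0 : Type*} [Fintype X] [Fintype U] [Fintype X0]
  [DecidableEq X] [DecidableEq U]

lemma envLawN_nonneg (N : ℕ) (μ0 : ↥(stdSimplex ℝ X)) (μ00 : ↥(stdSimplex ℝ X0))
    (P0 : X0 → ↥(stdSimplex ℝ (X × U)) → ↥(stdSimplex ℝ X0))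
    (πv : Fin (N + 1) → ℕ → X0 → X → ↥(stdSimplex ℝ U)) :
    ∀ t x0, 0 ≤ envLawN N μ0 μ00 P0 πv t x0 := by
  intro t
  induction t with
  | zero => exact fun x0 => μ00.2.1 x0
  | succ t ih =>
    intro y
    exact Finset.sum_nonneg fun x0 _ => mul_nonneg (ih x0)
      (empExp_nonneg _ _ _ fun G => (P0 x0 G).2.1 y)

lemma sum_envLawN (N : ℕ) (μ0 : ↥(stdSimplex ℝ X)) (μ00 : ↥(stdSimplex ℝ X0))
    (P0 : X0 → ↥(stdSimplex ℝ (X × U)) → ↥(stdSimplex ℝ X0))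
    (πv : Fin (N + 1) → ℕ → X0 → X → ↥(stdSimplex ℝ U)) :
    ∀ t, ∑ x0, envLawN N μ0 μ00 P0 πv t x0 = 1 := by
  intro t
  induction t with
  | zero => exact μ00.2.2
  | succ t ih =>
    show ∑ y, ∑ x0, envLawN N μ0 μ00 P0 πv t x0 *
        empExp N μ0 (fun i => πv i t x0) (fun G => (P0 x0 G).1 y) = 1
    rw [Finset.sum_comm]
    have : ∀ x0 : X0, ∑ y, envLawN N μ0 μ00 P0 πv t x0 *
        empExp N μ0 (fun i => πv i t x0) (fun G => (P0 x0 G).1 y)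
        = envLawN N μ0 μ00 P0 πv t x0 := by
      intro x0
      rw [← Finset.mul_sum, ← empExp_sum]
      have h1 : (fun G => ∑ y, (P0 x0 G).1 y) = fun _ => (1 : ℝ) :=
        funext fun G => (P0 x0 G).2.2
      rw [h1, empExp_const, mul_one]
    rw [Finset.sum_congr rfl fun x0 _ => this x0, ih]

lemma envLawMF_nonneg (μ0 : ↥(stdSimplex ℝ X)) (μ00 : ↥(stdSimplex ℝ X0))
    (P0 : X0 → ↥(stdSimplex ℝ (X × U)) → ↥(stdSimplex ℝ X0))
    (π : ℕ → X0 → X → ↥(stdSimplex ℝ U)) :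
    ∀ t x0, 0 ≤ envLawMF μ0 μ00 P0 π t x0 := by
  intro t
  induction t with
  | zero => exact fun x0 => μ00.2.1 x0
  | succ t ih =>
    intro y
    exact Finset.sum_nonneg fun x0 _ => mul_nonneg (ih x0) ((P0 x0 _).2.1 y)

lemma sum_envLawMF (μ0 : ↥(stdSimplex ℝ X)) (μ00 : ↥(stdSimplex ℝ X0))
    (P0 : X0 → ↥(stdSimplex ℝ (X × U)) → ↥(stdSimplex ℝ X0))
    (π : ℕ → X0 → X → ↥(stdSimplex ℝ U)) :
    ∀ t, ∑ x0, envLawMF μ0 μ00 P0 π t x0 = 1 := by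
  intro t
  induction t with
  | zero => exact μ00.2.2
  | succ t ih =>
    show ∑ y, ∑ x0, envLawMF μ0 μ00 P0 π t x0 * (P0 x0 (jointG μ0 (π t x0))).1 y = 1
    rw [Finset.sum_comm]
    have : ∀ x0 : X0, ∑ y, envLawMF μ0 μ00 P0 π t x0 * (P0 x0 (jointG μ0 (π t x0))).1 y
        = envLawMF μ0 μ00 P0 π t x0 := by
      intro x0
      rw [← Finset.mul_sum, (P0 x0 (jointG μ0 (π t x0))).2.2, mul_one]
    rw [Finset.sum_congr rfl fun x0 _ => this x0, ih]

/-- The `ℓ¹` distance between the `N`-agent and mean-field environment laws tends to `0`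
uniformly in the policy. -/
lemma law_close [Nonempty X0] (μ0 : ↥(stdSimplex ℝ X)) (μ00 : ↥(stdSimplex ℝ X0))
    (P0 : X0 → ↥(stdSimplex ℝ (X × U)) → ↥(stdSimplex ℝ X0))
    (hP0 : ∀ x0, Continuous (P0 x0)) :
    ∀ (t : ℕ) {ε : ℝ}, 0 < ε → ∀ᶠ N : ℕ in Filter.atTop,
      ∀ π : ℕ → X0 → X → ↥(stdSimplex ℝ U),
        ∑ x0, |envLawN N μ0 μ00 P0 (fun _ => π) t x0 - envLawMF μ0 μ00 P0 π t x0| ≤ ε := by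
  intro t
  induction t with
  | zero =>
    intro ε hε
    refine Filter.Eventually.of_forall fun N π => ?_
    have : ∀ x0 : X0, envLawN N μ0 μ00 P0 (fun _ => π) 0 x0 - envLawMF μ0 μ00 P0 π 0 x0 = 0 :=
      fun x0 => sub_self _
    simp only [this, abs_zero, Finset.sum_const_zero]
    exact le_of_lt hε
  | succ t ih =>
    intro ε hε
    set K0 : ℝ := (Fintype.card X0 : ℝ) with hK0
    have hK0pos : 0 < K0 := by
      rw [hK0]
      exact_mod_cast Fintype.card_pos
    set ε₂ : ℝ := ε / (2 * K0) with hε₂def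
    have hε₂pos : 0 < ε₂ := by positivity
    have hcont : ∀ (x0 y : X0), Continuous (fun G : ↥(stdSimplex ℝ (X × U)) => (P0 x0 G).1 y) :=
      fun x0 y => (continuous_apply y).comp (continuous_subtype_val.comp (hP0 x0))
    have hcore : ∀ᶠ N : ℕ in Filter.atTop, ∀ q : X0 × X0, ∀ h : X → ↥(stdSimplex ℝ U),
        |empExp N μ0 (fun _ => h) (fun G => (P0 q.1 G).1 q.2) -
          (P0 q.1 (jointG μ0 h)).1 q.2| ≤ ε₂ := by
      rw [Filter.eventually_all]
      intro q
      have := core (X := X) (U := U) μ0 (hcont q.1 q.2) hε₂pos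
      filter_upwards [this] with N hN h
      have := hN h
      simpa using this
    filter_upwards [ih (half_pos hε), hcore] with N hIH hco π
    have hIHπ := hIH π
    have herr : ∀ x0 y : X0, |empExp N μ0 (fun _ => π t x0) (fun G => (P0 x0 G).1 y) -
        (P0 x0 (jointG μ0 (π t x0))).1 y| ≤ ε₂ := fun x0 y => hco (x0, y) (π t x0)
    have hEEnn : ∀ x0 y : X0, 0 ≤ empExp N μ0 (fun _ => π t x0) (fun G => (P0 x0 G).1 y) :=
      fun x0 y => empExp_nonneg _ _ _ fun G => (P0 x0 G).2.1 y
    have hEE1 : ∀ x0 : X0, ∑ y, empExp N μ0 (fun _ => π t x0) (fun G => (P0 x0 G).1 y) = 1 := by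
      intro x0
      rw [← empExp_sum]
      have h1 : (fun G : ↥(stdSimplex ℝ (X × U)) => ∑ y, (P0 x0 G).1 y) = fun _ => (1 : ℝ) :=
        funext fun G => (P0 x0 G).2.2
      rw [h1, empExp_const]
    have hexp : ∀ y : X0, envLawN N μ0 μ00 P0 (fun _ => π) (t + 1) y =
        ∑ x0, envLawN N μ0 μ00 P0 (fun _ => π) t x0 *
          empExp N μ0 (fun _ => π t x0) (fun G => (P0 x0 G).1 y) := fun y => rfl
    have hexpM : ∀ y : X0, envLawMF μ0 μ00 P0 π (t + 1) y =
        ∑ x0, envLawMF μ0 μ00 P0 π t x0 * (P0 x0 (jointG μ0 (π t x0))).1 y := fun y => rfl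
    calc ∑ y, |envLawN N μ0 μ00 P0 (fun _ => π) (t + 1) y - envLawMF μ0 μ00 P0 π (t + 1) y|
        ≤ ∑ y, (∑ x0, |envLawN N μ0 μ00 P0 (fun _ => π) t x0 - envLawMF μ0 μ00 P0 π t x0| *
              empExp N μ0 (fun _ => π t x0) (fun G => (P0 x0 G).1 y) +
            ∑ x0, envLawMF μ0 μ00 P0 π t x0 *
              |empExp N μ0 (fun _ => π t x0) (fun G => (P0 x0 G).1 y) -
                (P0 x0 (jointG μ0 (π t x0))).1 y|) := by
          refine Finset.sum_le_sum fun y _ => ?_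
          rw [hexp y, hexpM y, ← Finset.sum_sub_distrib]
          have hre : ∀ x0 : X0, envLawN N μ0 μ00 P0 (fun _ => π) t x0 *
                empExp N μ0 (fun _ => π t x0) (fun G => (P0 x0 G).1 y) -
              envLawMF μ0 μ00 P0 π t x0 * (P0 x0 (jointG μ0 (π t x0))).1 y
              = (envLawN N μ0 μ00 P0 (fun _ => π) t x0 - envLawMF μ0 μ00 P0 π t x0) *
                  empExp N μ0 (fun _ => π t x0) (fun G => (P0 x0 G).1 y) +
                envLawMF μ0 μ00 P0 π t x0 *
                  (empExp N μ0 (fun _ => π t x0) (fun G => (P0 x0 G).1 y) -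
                    (P0 x0 (jointG μ0 (π t x0))).1 y) := fun x0 => by ring
          rw [Finset.sum_congr rfl fun x0 _ => hre x0]
          refine le_trans (Finset.abs_sum_le_sum_abs _ _) ?_
          rw [← Finset.sum_add_distrib]
          refine Finset.sum_le_sum fun x0 _ => ?_
          refine le_trans (abs_add_le _ _) (add_le_add ?_ ?_)
          · rw [abs_mul, abs_of_nonneg (hEEnn x0 y)]
          · rw [abs_mul, abs_of_nonneg (envLawMF_nonneg μ0 μ00 P0 π t x0)]
      _ = ∑ x0, |envLawN N μ0 μ00 P0 (fun _ => π) t x0 - envLawMF μ0 μ00 P0 π t x0| *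
              (∑ y, empExp N μ0 (fun _ => π t x0) (fun G => (P0 x0 G).1 y)) +
          ∑ x0, envLawMF μ0 μ00 P0 π t x0 *
            ∑ y, |empExp N μ0 (fun _ => π t x0) (fun G => (P0 x0 G).1 y) -
              (P0 x0 (jointG μ0 (π t x0))).1 y| := by
          rw [Finset.sum_add_distrib]
          congr 1
          · rw [Finset.sum_comm]
            exact Finset.sum_congr rfl fun x0 _ => (Finset.mul_sum _ _ _).symm
          · rw [Finset.sum_comm]
            exact Finset.sum_congr rfl fun x0 _ => (Finset.mul_sum _ _ _).symm
      _ ≤ ε / 2 + ∑ x0 : X0, envLawMF μ0 μ00 P0 π t x0 * (K0 * ε₂) := by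
          refine add_le_add ?_ ?_
          · calc ∑ x0, |envLawN N μ0 μ00 P0 (fun _ => π) t x0 - envLawMF μ0 μ00 P0 π t x0| *
                  (∑ y, empExp N μ0 (fun _ => π t x0) (fun G => (P0 x0 G).1 y))
                = ∑ x0, |envLawN N μ0 μ00 P0 (fun _ => π) t x0 - envLawMF μ0 μ00 P0 π t x0| := by
                  refine Finset.sum_congr rfl fun x0 _ => ?_
                  rw [hEE1 x0, mul_one]
              _ ≤ ε / 2 := hIHπ
          · refine Finset.sum_le_sum fun x0 _ => ?_
            refine mul_le_mul_of_nonneg_left ?_ (envLawMF_nonneg μ0 μ00 P0 π t x0)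
            calc ∑ y, |empExp N μ0 (fun _ => π t x0) (fun G => (P0 x0 G).1 y) -
                  (P0 x0 (jointG μ0 (π t x0))).1 y|
                ≤ ∑ _y : X0, ε₂ := Finset.sum_le_sum fun y _ => herr x0 y
              _ = K0 * ε₂ := by rw [Finset.sum_const, Finset.card_univ, nsmul_eq_mul, hK0]
      _ = ε / 2 + K0 * ε₂ := by
          rw [← Finset.sum_mul, sum_envLawMF, one_mul]
      _ ≤ ε := by
          rw [hε₂def]
          rw [mul_div_assoc']
          rw [mul_comm K0 ε, mul_div_assoc, mul_comm (2 : ℝ) K0, ← div_div,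
            div_self (ne_of_gt hK0pos)]
          linarith

end MFCaux

namespace MFCaux
set_option linter.unusedSectionVars false

variable {X U X0 : Type*} [Fintype X] [Fintype U] [Fintype X0]
  [DecidableEq X] [DecidableEq U]

lemma simplex_nonempty {A : Type*} [Fintype A] [Nonempty A] :
    Nonempty ↥(stdSimplex ℝ A) := by
  refine ⟨⟨fun _ => (Fintype.card A : ℝ)⁻¹, fun _ => by positivity, ?_⟩⟩
  rw [Finset.sum_const, Finset.card_univ, nsmul_eq_mul]
  rw [mul_inv_cancel₀]
  exact_mod_cast Fintype.card_pos.ne'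

/-- Uniform (in the policy) bound on `|J^N − J|`, eventually in `N`. -/
lemma J_close [Nonempty X0] (μ0 : ↥(stdSimplex ℝ X)) (μ00 : ↥(stdSimplex ℝ X0))
    (P0 : X0 → ↥(stdSimplex ℝ (X × U)) → ↥(stdSimplex ℝ X0))
    (r : X0 → ↥(stdSimplex ℝ (X × U)) → ℝ)
    (γ : ℝ) (hγ : γ ∈ Set.Ioo (0 : ℝ) 1)
    (hr : ∀ x0, Continuous (r x0)) (hP0 : ∀ x0, Continuous (P0 x0))
    {ε : ℝ} (hε : 0 < ε) :
    ∀ᶠ N : ℕ in Filter.atTop, ∀ π : ℕ → X0 → X → ↥(stdSimplex ℝ U),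
      |JN N μ0 μ00 P0 r γ (fun _ => π) - JMF μ0 μ00 P0 r γ π| ≤ ε := by
  obtain ⟨hγ0, hγ1⟩ := hγ
  haveI : CompactSpace ↥(stdSimplex ℝ (X × U)) :=
    isCompact_iff_compactSpace.mp (isCompact_stdSimplex _ _)
  -- a uniform bound on |r|
  have hrb : ∀ x0 : X0, ∃ C, ∀ G, |r x0 G| ≤ C := by
    intro x0
    obtain ⟨C0, hC0⟩ := (isCompact_univ (X := ↥(stdSimplex ℝ (X × U)))).exists_bound_of_continuousOn
      (hr x0).continuousOn
    exact ⟨C0, fun G => le_trans (le_of_eq (Real.norm_eq_abs _).symm) (hC0 G (Set.mem_univ G))⟩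
  choose Cf hCf using hrb
  set C : ℝ := 1 + ∑ x0, |Cf x0| with hCdef
  have hC1 : 1 ≤ C := by
    rw [hCdef]
    have : 0 ≤ ∑ x0, |Cf x0| := Finset.sum_nonneg fun _ _ => abs_nonneg _
    linarith
  have hCpos : 0 < C := lt_of_lt_of_le one_pos hC1
  have hCb : ∀ x0 G, |r x0 G| ≤ C := by
    intro x0 G
    calc |r x0 G| ≤ Cf x0 := hCf x0 G
      _ ≤ |Cf x0| := le_abs_self _
      _ ≤ ∑ y, |Cf y| := Finset.single_le_sum (f := fun y => |Cf y|)
          (fun y _ => abs_nonneg _) (Finset.mem_univ x0)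
      _ ≤ C := by rw [hCdef]; linarith
  -- choose the truncation time T
  obtain ⟨T, hT⟩ : ∃ T : ℕ, γ ^ T * (2 * C / (1 - γ)) ≤ ε / 4 := by
    have h1 : Filter.Tendsto (fun T : ℕ => γ ^ T * (2 * C / (1 - γ)))
        Filter.atTop (𝓝 0) := by
      have := tendsto_pow_atTop_nhds_zero_of_lt_one (le_of_lt hγ0) hγ1
      simpa using this.mul_const (2 * C / (1 - γ))
    exact (h1.eventually_le_const (by positivity)).exists
  set ε₁ : ℝ := ε / (8 * C * (T + 1)) with hε₁def
  set ε₂ : ℝ := ε / (8 * (T + 1)) with hε₂def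
  have hε₁pos : 0 < ε₁ := by rw [hε₁def]; positivity
  have hε₂pos : 0 < ε₂ := by rw [hε₂def]; positivity
  -- eventual closeness of laws up to time T, and of the reward expectations
  have hlawT : ∀ᶠ N : ℕ in Filter.atTop, ∀ t ∈ Set.Iio T,
      ∀ π : ℕ → X0 → X → ↥(stdSimplex ℝ U),
        ∑ x0, |envLawN N μ0 μ00 P0 (fun _ => π) t x0 - envLawMF μ0 μ00 P0 π t x0| ≤ ε₁ := by
    rw [Filter.eventually_all_finite (Set.finite_Iio T)]
    exact fun t _ => law_close μ0 μ00 P0 hP0 t hε₁pos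
  have hrerr : ∀ᶠ N : ℕ in Filter.atTop, ∀ x0 : X0, ∀ h : X → ↥(stdSimplex ℝ U),
      |empExp N μ0 (fun _ => h) (fun G => r x0 G) - r x0 (jointG μ0 h)| ≤ ε₂ := by
    rw [Filter.eventually_all]
    exact fun x0 => core μ0 (hr x0) hε₂pos
  filter_upwards [hlawT, hrerr] with N hlaw hre π
  set aN : ℕ → ℝ := fun t => γ ^ t * ∑ x0, envLawN N μ0 μ00 P0 (fun _ => π) t x0 *
    empExp N μ0 (fun _ => π t x0) (fun G => r x0 G) with haN
  set aM : ℕ → ℝ := fun t => γ ^ t * ∑ x0, envLawMF μ0 μ00 P0 π t x0 *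
    r x0 (jointG μ0 (π t x0)) with haM
  have hJNeq : JN N μ0 μ00 P0 r γ (fun _ => π) = ∑' t, aN t := rfl
  have hJMeq : JMF μ0 μ00 P0 r γ π = ∑' t, aM t := rfl
  -- uniform bounds on the summands
  have hSNb : ∀ t, |∑ x0, envLawN N μ0 μ00 P0 (fun _ => π) t x0 *
      empExp N μ0 (fun _ => π t x0) (fun G => r x0 G)| ≤ C := by
    intro t
    refine le_trans (Finset.abs_sum_le_sum_abs _ _) ?_
    calc ∑ x0, |envLawN N μ0 μ00 P0 (fun _ => π) t x0 *
          empExp N μ0 (fun _ => π t x0) (fun G => r x0 G)|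
        ≤ ∑ x0, envLawN N μ0 μ00 P0 (fun _ => π) t x0 * C := by
          refine Finset.sum_le_sum fun x0 _ => ?_
          rw [abs_mul, abs_of_nonneg (envLawN_nonneg N μ0 μ00 P0 _ t x0)]
          exact mul_le_mul_of_nonneg_left (abs_empExp_le N μ0 _ fun G => hCb x0 G)
            (envLawN_nonneg N μ0 μ00 P0 _ t x0)
      _ = C := by rw [← Finset.sum_mul, sum_envLawN, one_mul]
  have hSMb : ∀ t, |∑ x0, envLawMF μ0 μ00 P0 π t x0 * r x0 (jointG μ0 (π t x0))| ≤ C := by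
    intro t
    refine le_trans (Finset.abs_sum_le_sum_abs _ _) ?_
    calc ∑ x0, |envLawMF μ0 μ00 P0 π t x0 * r x0 (jointG μ0 (π t x0))|
        ≤ ∑ x0, envLawMF μ0 μ00 P0 π t x0 * C := by
          refine Finset.sum_le_sum fun x0 _ => ?_
          rw [abs_mul, abs_of_nonneg (envLawMF_nonneg μ0 μ00 P0 π t x0)]
          exact mul_le_mul_of_nonneg_left (hCb x0 _) (envLawMF_nonneg μ0 μ00 P0 π t x0)
      _ = C := by rw [← Finset.sum_mul, sum_envLawMF, one_mul]
  have haNb : ∀ t, |aN t| ≤ C * γ ^ t := by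
    intro t
    rw [haN]
    rw [abs_mul, abs_of_nonneg (pow_nonneg (le_of_lt hγ0) t)]
    calc γ ^ t * |∑ x0, envLawN N μ0 μ00 P0 (fun _ => π) t x0 *
          empExp N μ0 (fun _ => π t x0) (fun G => r x0 G)|
        ≤ γ ^ t * C := mul_le_mul_of_nonneg_left (hSNb t) (pow_nonneg (le_of_lt hγ0) t)
      _ = C * γ ^ t := mul_comm _ _
  have haMb : ∀ t, |aM t| ≤ C * γ ^ t := by
    intro t
    rw [haM]
    rw [abs_mul, abs_of_nonneg (pow_nonneg (le_of_lt hγ0) t)]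
    calc γ ^ t * |∑ x0, envLawMF μ0 μ00 P0 π t x0 * r x0 (jointG μ0 (π t x0))|
        ≤ γ ^ t * C := mul_le_mul_of_nonneg_left (hSMb t) (pow_nonneg (le_of_lt hγ0) t)
      _ = C * γ ^ t := mul_comm _ _
  have hgeo : Summable fun t : ℕ => γ ^ t := summable_geometric_of_lt_one (le_of_lt hγ0) hγ1
  have hsumN : Summable aN := Summable.of_norm_bounded (hgeo.mul_left C) haNb
  have hsumM : Summable aM := Summable.of_norm_bounded (hgeo.mul_left C) haMb
  set b : ℕ → ℝ := fun t => aN t - aM t with hb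
  have hsb : Summable b := hsumN.sub hsumM
  have hdiff : JN N μ0 μ00 P0 r γ (fun _ => π) - JMF μ0 μ00 P0 r γ π = ∑' t, b t := by
    rw [hJNeq, hJMeq, hb]
    exact (Summable.tsum_sub hsumN hsumM).symm
  rw [hdiff]
  -- split into head and tail
  have hsplit := Summable.sum_add_tsum_nat_add T hsb
  rw [← hsplit]
  have hbb : ∀ t, |b t| ≤ 2 * C * γ ^ t := by
    intro t
    calc |b t| ≤ |aN t| + |aM t| := abs_sub _ _
      _ ≤ C * γ ^ t + C * γ ^ t := add_le_add (haNb t) (haMb t)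
      _ = 2 * C * γ ^ t := by ring
  -- tail bound
  have htail_norm : Summable fun i : ℕ => |b (i + T)| := by
    refine Summable.of_nonneg_of_le (fun i => abs_nonneg _) (fun i => ?_)
      (((hgeo.mul_left (2 * C * γ ^ T))))
    calc |b (i + T)| ≤ 2 * C * γ ^ (i + T) := hbb (i + T)
      _ = 2 * C * γ ^ T * γ ^ i := by rw [pow_add]; ring
  have htail : |∑' i : ℕ, b (i + T)| ≤ ε / 4 := by
    calc |∑' i : ℕ, b (i + T)| ≤ ∑' i : ℕ, |b (i + T)| := by
          have := norm_tsum_le_tsum_norm (f := fun i : ℕ => b (i + T)) (by simpa using htail_norm)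
          simpa using this
      _ ≤ ∑' i : ℕ, 2 * C * γ ^ T * γ ^ i := by
          refine Summable.tsum_le_tsum (fun i => ?_) htail_norm (hgeo.mul_left _)
          calc |b (i + T)| ≤ 2 * C * γ ^ (i + T) := hbb (i + T)
            _ = 2 * C * γ ^ T * γ ^ i := by rw [pow_add]; ring
      _ = 2 * C * γ ^ T * (1 - γ)⁻¹ := by
          rw [tsum_mul_left, tsum_geometric_of_lt_one (le_of_lt hγ0) hγ1]
      _ = γ ^ T * (2 * C / (1 - γ)) := by rw [div_eq_mul_inv]; ring
      _ ≤ ε / 4 := hT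
  -- head bound
  have hhead : ∀ t < T, |b t| ≤ C * ε₁ + ε₂ := by
    intro t ht
    have hsplit2 : ∑ x0, envLawN N μ0 μ00 P0 (fun _ => π) t x0 *
          empExp N μ0 (fun _ => π t x0) (fun G => r x0 G) -
        ∑ x0, envLawMF μ0 μ00 P0 π t x0 * r x0 (jointG μ0 (π t x0))
        = ∑ x0, ((envLawN N μ0 μ00 P0 (fun _ => π) t x0 - envLawMF μ0 μ00 P0 π t x0) *
            empExp N μ0 (fun _ => π t x0) (fun G => r x0 G) +
          envLawMF μ0 μ00 P0 π t x0 *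
            (empExp N μ0 (fun _ => π t x0) (fun G => r x0 G) - r x0 (jointG μ0 (π t x0)))) := by
      rw [← Finset.sum_sub_distrib]
      exact Finset.sum_congr rfl fun x0 _ => by ring
    have hmid : |∑ x0, envLawN N μ0 μ00 P0 (fun _ => π) t x0 *
          empExp N μ0 (fun _ => π t x0) (fun G => r x0 G) -
        ∑ x0, envLawMF μ0 μ00 P0 π t x0 * r x0 (jointG μ0 (π t x0))| ≤ C * ε₁ + ε₂ := by
      rw [hsplit2]
      refine le_trans (Finset.abs_sum_le_sum_abs _ _) ?_
      calc ∑ x0, |(envLawN N μ0 μ00 P0 (fun _ => π) t x0 - envLawMF μ0 μ00 P0 π t x0) *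
              empExp N μ0 (fun _ => π t x0) (fun G => r x0 G) +
            envLawMF μ0 μ00 P0 π t x0 *
              (empExp N μ0 (fun _ => π t x0) (fun G => r x0 G) - r x0 (jointG μ0 (π t x0)))|
          ≤ ∑ x0, (|envLawN N μ0 μ00 P0 (fun _ => π) t x0 - envLawMF μ0 μ00 P0 π t x0| * C +
              envLawMF μ0 μ00 P0 π t x0 * ε₂) := by
            refine Finset.sum_le_sum fun x0 _ => ?_
            refine le_trans (abs_add_le _ _) (add_le_add ?_ ?_)
            · rw [abs_mul]
              exact mul_le_mul_of_nonneg_left (abs_empExp_le N μ0 _ fun G => hCb x0 G)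
                (abs_nonneg _)
            · rw [abs_mul, abs_of_nonneg (envLawMF_nonneg μ0 μ00 P0 π t x0)]
              exact mul_le_mul_of_nonneg_left (hre x0 (π t x0))
                (envLawMF_nonneg μ0 μ00 P0 π t x0)
        _ = (∑ x0, |envLawN N μ0 μ00 P0 (fun _ => π) t x0 - envLawMF μ0 μ00 P0 π t x0|) * C +
            (∑ x0, envLawMF μ0 μ00 P0 π t x0) * ε₂ := by
            rw [Finset.sum_add_distrib, Finset.sum_mul, Finset.sum_mul]
        _ ≤ ε₁ * C + 1 * ε₂ := by
            refine add_le_add ?_ ?_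
            · exact mul_le_mul_of_nonneg_right (hlaw t ht π) (le_of_lt hCpos)
            · rw [sum_envLawMF]
        _ = C * ε₁ + ε₂ := by ring
    calc |b t| = γ ^ t * |∑ x0, envLawN N μ0 μ00 P0 (fun _ => π) t x0 *
            empExp N μ0 (fun _ => π t x0) (fun G => r x0 G) -
          ∑ x0, envLawMF μ0 μ00 P0 π t x0 * r x0 (jointG μ0 (π t x0))| := by
          rw [hb, haN, haM]
          simp only []
          rw [← mul_sub, abs_mul, abs_of_nonneg (pow_nonneg (le_of_lt hγ0) t)]
      _ ≤ 1 * (C * ε₁ + ε₂) := by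
          refine mul_le_mul (pow_le_one₀ (le_of_lt hγ0) (le_of_lt hγ1)) hmid (abs_nonneg _) ?_
          norm_num
      _ = C * ε₁ + ε₂ := one_mul _
  have hheadsum : |∑ t ∈ Finset.range T, b t| ≤ ε / 4 := by
    have h1 : |∑ t ∈ Finset.range T, b t| ≤ ∑ t ∈ Finset.range T, (C * ε₁ + ε₂) := by
      refine le_trans (Finset.abs_sum_le_sum_abs _ _) (Finset.sum_le_sum fun t ht => ?_)
      exact hhead t (Finset.mem_range.mp ht)
    rw [Finset.sum_const, Finset.card_range, nsmul_eq_mul] at h1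
    refine le_trans h1 ?_
    have hCε₁ : C * ε₁ = ε / (8 * ((T : ℝ) + 1)) := by
      rw [hε₁def]
      field_simp
    have hε₂' : ε₂ = ε / (8 * ((T : ℝ) + 1)) := hε₂def
    rw [hCε₁, hε₂']
    set a : ℝ := ε / (8 * ((T : ℝ) + 1)) with ha
    have haD : a * (8 * ((T : ℝ) + 1)) = ε := by
      rw [ha]
      field_simp
    have hann : 0 ≤ a := by rw [ha]; positivity
    have hT0 : (0 : ℝ) ≤ (T : ℝ) := Nat.cast_nonneg _
    have hεeq : ε / 4 = 2 * a * ((T : ℝ) + 1) := by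
      rw [← haD]; ring
    rw [hεeq]
    nlinarith
  calc |∑ t ∈ Finset.range T, b t + ∑' i : ℕ, b (i + T)|
      ≤ |∑ t ∈ Finset.range T, b t| + |∑' i : ℕ, b (i + T)| := abs_add_le _ _
    _ ≤ ε / 4 + ε / 4 := add_le_add hheadsum htail
    _ ≤ ε := by linarith

end MFCaux

/-- Under the continuity assumption on `r` and `P⁰`, the `N`-agent objective
converges to the mean-field objective uniformly over all mean-field policies:
`lim_{N→∞} sup_{π∈Π} |J^N(π^N(π)) − J(π)| = 0`.
(The number of agents is written as `N + 1` so that the empirical distribution is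
well-defined; the limit `N → ∞` is unaffected.) -/
theorem N_agent_objective_tendsto_mean_field
    {X U X0 : Type*} [Fintype X] [Fintype U] [Fintype X0]
    [Nonempty X] [Nonempty U] [Nonempty X0] [DecidableEq X] [DecidableEq U]
    (μ0 : ↥(stdSimplex ℝ X)) (μ00 : ↥(stdSimplex ℝ X0))
    (P0 : X0 → ↥(stdSimplex ℝ (X × U)) → ↥(stdSimplex ℝ X0))
    (r : X0 → ↥(stdSimplex ℝ (X × U)) → ℝ)
    (γ : ℝ) (hγ : γ ∈ Set.Ioo (0 : ℝ) 1)
    -- Assumption 1: continuity of r and P⁰ in the state-action distribution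
    (hr : ∀ x0, Continuous (r x0)) (hP0 : ∀ x0, Continuous (P0 x0)) :
    Tendsto (fun N : ℕ =>
        ⨆ π : ℕ → X0 → X → ↥(stdSimplex ℝ U),
          |JN N μ0 μ00 P0 r γ (fun _ => π) - JMF μ0 μ00 P0 r γ π|)
      atTop (𝓝 0) := by
  haveI : Nonempty ↥(stdSimplex ℝ U) := MFCaux.simplex_nonempty
  rw [Metric.tendsto_nhds]
  intro ε hε
  have hkey := MFCaux.J_close μ0 μ00 P0 r γ hγ hr hP0 (half_pos hε)
  filter_upwards [hkey] with N hN
  rw [Real.dist_eq, sub_zero]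
  have hbdd : BddAbove (Set.range fun π : ℕ → X0 → X → ↥(stdSimplex ℝ U) =>
      |JN N μ0 μ00 P0 r γ (fun _ => π) - JMF μ0 μ00 P0 r γ π|) := by
    refine ⟨ε / 2, ?_⟩
    rintro x ⟨π, rfl⟩
    exact hN π
  have hub : (⨆ π : ℕ → X0 → X → ↥(stdSimplex ℝ U),
      |JN N μ0 μ00 P0 r γ (fun _ => π) - JMF μ0 μ00 P0 r γ π|) ≤ ε / 2 := ciSup_le hN
  have hlb : 0 ≤ ⨆ π : ℕ → X0 → X → ↥(stdSimplex ℝ U),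
      |JN N μ0 μ00 P0 r γ (fun _ => π) - JMF μ0 μ00 P0 r γ π| :=
    le_trans (abs_nonneg _) (le_ciSup hbdd (Classical.arbitrary _))
  rw [abs_of_nonneg hlb]
  linarith
end

section
/- Under the continuity assumption on r and P^0, for every t ≥ 0 the law of the N-agent environment state converges to the law of the mean-field environment state uniformly over all mean-field policies: sup_{π∈Π} ‖L(x^{0,N}_t) − L(x^0_t)‖₁ → 0 as N → ∞, where x^{0,N}_t is the environment state of the N-agent system under the policy tuple π^N(π) and x^0_t is the mean-field environment state under π. -/
open Finset Filter Topology

section Helpers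
set_option linter.unusedSectionVars false
variable {X U X0 : Type*} [Fintype X] [Fintype U] [Fintype X0] [neX : Nonempty X] [neU : Nonempty U] [neX0 : Nonempty X0] [DecidableEq X] [DecidableEq U]

lemma sum_pi_prod {n : ℕ} {V : Type*} [Fintype V] [DecidableEq V] (F : Fin n → V → ℝ) :
    ∑ s : Fin n → V, ∏ i, F i (s i) = ∏ i, ∑ v, F i v := by
  rw [Finset.prod_univ_sum]
  rw [Fintype.piFinset_univ]

variable {X U : Type*} [Fintype X] [Fintype U] [DecidableEq X] [DecidableEq U]

lemma exp_ind {n : ℕ} (w : X × U → ℝ) (hw : ∑ p, w p = 1)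
    (T : Finset (Fin n)) (p : X × U) :
    ∑ s : Fin n → X × U, (∏ i, w (s i)) * (∏ i ∈ T, if s i = p then (1:ℝ) else 0)
      = (w p) ^ T.card := by
  have key : ∀ s : Fin n → X × U,
      (∏ i, w (s i)) * (∏ i ∈ T, if s i = p then (1:ℝ) else 0)
        = ∏ i, (w (s i) * if i ∈ T then (if s i = p then (1:ℝ) else 0) else 1) := by
    intro s
    rw [Finset.prod_mul_distrib]
    congr 1
    rw [Finset.prod_ite_mem, Finset.univ_inter]
  rw [Finset.sum_congr rfl fun s _ => key s,
    sum_pi_prod (fun i v => w v * if i ∈ T then (if v = p then (1:ℝ) else 0) else 1)]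
  have : ∀ i : Fin n, (∑ v : X × U, w v * if i ∈ T then (if v = p then (1:ℝ) else 0) else 1)
      = if i ∈ T then w p else 1 := by
    intro i
    by_cases hi : i ∈ T <;> simp [hi, hw, mul_comm]
  rw [Finset.prod_congr rfl fun i _ => this i, Finset.prod_ite_mem, Finset.univ_inter,
    Finset.prod_const]

lemma first_moment {n : ℕ} (w : X × U → ℝ) (hw : ∑ p, w p = 1) (p : X × U) :
    ∑ s : Fin n → X × U, (∏ i, w (s i)) * (∑ i, if s i = p then (1:ℝ) else 0)
      = n * w p := by
  have : ∀ s : Fin n → X × U, (∏ i, w (s i)) * (∑ i, if s i = p then (1:ℝ) else 0)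
      = ∑ j, (∏ i, w (s i)) * (∏ i ∈ ({j} : Finset (Fin n)), if s i = p then (1:ℝ) else 0) := by
    intro s
    rw [Finset.mul_sum]
    exact Finset.sum_congr rfl fun j _ => by rw [Finset.prod_singleton]
  rw [Finset.sum_congr rfl fun s _ => this s, Finset.sum_comm]
  rw [Finset.sum_congr rfl fun j _ => exp_ind w hw {j} p]
  simp

lemma pair_prod {n : ℕ} (s : Fin n → X × U) (p : X × U) (j k : Fin n) :
    (if s j = p then (1:ℝ) else 0) * (if s k = p then (1:ℝ) else 0)
      = ∏ i ∈ ({j, k} : Finset (Fin n)), if s i = p then (1:ℝ) else 0 := by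
  by_cases hjk : j = k
  · subst hjk
    rw [show ({j, j} : Finset (Fin n)) = {j} by simp, Finset.prod_singleton]
    by_cases hs : s j = p <;> simp [hs]
  · rw [Finset.prod_pair hjk]

lemma second_moment {n : ℕ} (w : X × U → ℝ) (hw : ∑ p, w p = 1) (p : X × U) :
    ∑ s : Fin n → X × U, (∏ i, w (s i)) * (∑ i, if s i = p then (1:ℝ) else 0)^2
      = n * w p + ((n:ℝ)^2 - n) * (w p)^2 := by
  set q := w p with hq
  have expand : ∀ s : Fin n → X × U,
      (∏ i, w (s i)) * (∑ i, if s i = p then (1:ℝ) else 0)^2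
      = ∑ j, ∑ k, (∏ i, w (s i)) *
          (∏ i ∈ ({j, k} : Finset (Fin n)), if s i = p then (1:ℝ) else 0) := by
    intro s
    rw [sq, Finset.sum_mul_sum, Finset.mul_sum]
    refine Finset.sum_congr rfl fun j _ => ?_
    rw [Finset.mul_sum]
    refine Finset.sum_congr rfl fun k _ => ?_
    rw [pair_prod]
  rw [Finset.sum_congr rfl fun s _ => expand s, Finset.sum_comm]
  have step : ∀ j : Fin n, (∑ s : Fin n → X × U, ∑ k : Fin n, (∏ i, w (s i)) *
      (∏ i ∈ ({j, k} : Finset (Fin n)), if s i = p then (1:ℝ) else 0))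
      = ∑ k : Fin n, (q^2 + if k = j then q - q^2 else 0) := by
    intro j
    rw [Finset.sum_comm]
    refine Finset.sum_congr rfl fun k _ => ?_
    rw [exp_ind w hw {j, k} p]
    by_cases hjk : k = j
    · subst hjk
      rw [show ({k, k} : Finset (Fin n)) = {k} by simp]
      simp [sq, hq]
    · have hc : ({j, k} : Finset (Fin n)).card = 2 :=
        Finset.card_pair (fun h => hjk h.symm)
      simp [hc, hjk, sq, hq]
  rw [Finset.sum_congr rfl fun j _ => step j]
  simp only [Finset.sum_add_distrib, Finset.sum_const, Finset.card_univ, Fintype.card_fin,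
    Finset.sum_ite_eq', Finset.mem_univ, if_true, nsmul_eq_mul]
  ring

lemma weight_sum_one {n : ℕ} (w : X × U → ℝ) (hw : ∑ p, w p = 1) :
    ∑ s : Fin n → X × U, (∏ i, w (s i)) = 1 := by
  rw [sum_pi_prod (fun _ v => w v)]
  simp [hw]

lemma variance_bound {n : ℕ} (hn : 0 < n) (w : X × U → ℝ) (hw0 : ∀ p, 0 ≤ w p)
    (hw : ∑ p, w p = 1) (p : X × U) :
    ∑ s : Fin n → X × U, (∏ i, w (s i)) *
      ((∑ i, if s i = p then (1:ℝ) else 0) / n - w p)^2 ≤ 1 / n := by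
  have hnR : (0:ℝ) < n := by exact_mod_cast hn
  set q := w p with hq
  have hq1 : q ≤ 1 := by
    rw [← hw]
    exact Finset.single_le_sum (fun p _ => hw0 p) (Finset.mem_univ p)
  have expand : ∀ s : Fin n → X × U, (∏ i, w (s i)) *
      ((∑ i, if s i = p then (1:ℝ) else 0) / n - q)^2
      = ((∏ i, w (s i)) * (∑ i, if s i = p then (1:ℝ) else 0)^2) / n^2
        - (2*q/n) * ((∏ i, w (s i)) * (∑ i, if s i = p then (1:ℝ) else 0))
        + q^2 * (∏ i, w (s i)) := by
    intro s
    field_simp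
    ring
  rw [Finset.sum_congr rfl fun s _ => expand s]
  rw [Finset.sum_add_distrib, Finset.sum_sub_distrib, ← Finset.sum_div, ← Finset.mul_sum,
    ← Finset.mul_sum, first_moment w hw, second_moment w hw, weight_sum_one w hw]
  rw [← hq]
  have key : ((n:ℝ) * q + ((n:ℝ)^2 - n) * q^2) / n^2 - 2*q/n * (n*q) + q^2 * 1
      = (q - q^2) / n := by
    field_simp
    ring
  rw [key]
  have h1 : q - q^2 ≤ 1 := by nlinarith [hw0 p]
  gcongr

lemma dist_sq_le_sum {ι : Type*} [Fintype ι] [Nonempty ι] (f g : ι → ℝ) :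
    (dist f g)^2 ≤ ∑ p, (f p - g p)^2 := by
  obtain ⟨p, -, hp⟩ := Finset.exists_mem_eq_sup (Finset.univ : Finset ι)
    Finset.univ_nonempty (fun b => nndist (f b) (g b))
  have : dist f g = dist (f p) (g p) := by
    rw [dist_pi_def, hp]
    rfl
  rw [this, Real.dist_eq, sq_abs]
  exact Finset.single_le_sum (f := fun q => (f q - g q)^2)
    (fun q _ => sq_nonneg _) (Finset.mem_univ p)

lemma sampleWeight_eq (N : ℕ) (μ0 : ↥(stdSimplex ℝ X)) (h : X → ↥(stdSimplex ℝ U))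
    (s : Fin (N+1) → X × U) :
    sampleWeight N μ0 (fun _ => h) s
      = ∏ i, (fun p : X × U => μ0.1 p.1 * (h p.1).1 p.2) (s i) := rfl

lemma wgt_nonneg (μ0 : ↥(stdSimplex ℝ X)) (h : X → ↥(stdSimplex ℝ U)) (p : X × U) :
    0 ≤ μ0.1 p.1 * (h p.1).1 p.2 :=
  mul_nonneg (μ0.2.1 p.1) ((h p.1).2.1 p.2)

lemma wgt_sum (μ0 : ↥(stdSimplex ℝ X)) (h : X → ↥(stdSimplex ℝ U)) :
    ∑ p : X × U, μ0.1 p.1 * (h p.1).1 p.2 = 1 := by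
  have := (jointG μ0 h).2.2
  rw [← this]
  exact Finset.sum_congr rfl fun p _ => (mul_comm _ _)

lemma sampleWeight_nonneg (N : ℕ) (μ0 : ↥(stdSimplex ℝ X)) (h : X → ↥(stdSimplex ℝ U))
    (s : Fin (N+1) → X × U) : 0 ≤ sampleWeight N μ0 (fun _ => h) s :=
  Finset.prod_nonneg fun i _ => wgt_nonneg μ0 h (s i)

lemma sampleWeight_sum_one (N : ℕ) (μ0 : ↥(stdSimplex ℝ X)) (h : X → ↥(stdSimplex ℝ U)) :
    ∑ s : Fin (N+1) → X × U, sampleWeight N μ0 (fun _ => h) s = 1 := by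
  simp only [sampleWeight_eq]
  exact weight_sum_one _ (wgt_sum μ0 h)

lemma exp_dist_sq [Nonempty (X × U)] (N : ℕ) (μ0 : ↥(stdSimplex ℝ X)) (h : X → ↥(stdSimplex ℝ U)) :
    ∑ s : Fin (N+1) → X × U, sampleWeight N μ0 (fun _ => h) s *
      (dist (empDist N s) (jointG μ0 h))^2 ≤ (Fintype.card (X × U)) / ((N:ℝ)+1) := by
  set w : X × U → ℝ := fun p => μ0.1 p.1 * (h p.1).1 p.2 with hwdef
  have hw0 : ∀ p, 0 ≤ w p := wgt_nonneg μ0 h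
  have hw1 : ∑ p, w p = 1 := wgt_sum μ0 h
  have step1 : ∀ s : Fin (N+1) → X × U, sampleWeight N μ0 (fun _ => h) s *
      (dist (empDist N s) (jointG μ0 h))^2
      ≤ ∑ p, sampleWeight N μ0 (fun _ => h) s *
        ((∑ i, if s i = p then (1:ℝ) else 0) / ((N:ℝ)+1) - w p)^2 := by
    intro s
    rw [← Finset.mul_sum]
    refine mul_le_mul_of_nonneg_left ?_ (sampleWeight_nonneg N μ0 h s)
    rw [Subtype.dist_eq]
    refine le_trans (dist_sq_le_sum _ _) (le_of_eq ?_)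
    refine Finset.sum_congr rfl fun p _ => ?_
    congr 1
    show (∑ i, if s i = p then (1:ℝ) else 0) / ((N:ℕ)+1 : ℝ) - (h p.1).1 p.2 * μ0.1 p.1
      = (∑ i, if s i = p then (1:ℝ) else 0) / ((N:ℝ)+1) - w p
    push_cast
    rw [hwdef, mul_comm]
  refine le_trans (Finset.sum_le_sum fun s _ => step1 s) ?_
  rw [Finset.sum_comm]
  have step2 : ∀ p : X × U, ∑ s : Fin (N+1) → X × U, sampleWeight N μ0 (fun _ => h) s *
      ((∑ i, if s i = p then (1:ℝ) else 0) / ((N:ℝ)+1) - w p)^2 ≤ 1 / ((N:ℝ)+1) := by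
    intro p
    have := variance_bound (n := N+1) (Nat.succ_pos N) w hw0 hw1 p
    simp only [sampleWeight_eq]
    refine le_trans (le_of_eq ?_) (by push_cast at this ⊢; convert this using 2 <;> norm_num)
    rfl
  refine le_trans (Finset.sum_le_sum fun p _ => step2 p) ?_
  rw [Finset.sum_const, Finset.card_univ, nsmul_eq_mul]
  rw [mul_one_div]

lemma single_step [Nonempty (X × U)] [Nonempty X0] (μ0 : ↥(stdSimplex ℝ X))
    (P0 : X0 → ↥(stdSimplex ℝ (X × U)) → ↥(stdSimplex ℝ X0))
    (hP0 : ∀ x0, Continuous (P0 x0)) {ε : ℝ} (hε : 0 < ε) :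
    ∃ K : ℕ, ∀ N ≥ K, ∀ (h : X → ↥(stdSimplex ℝ U)) (x0 : X0),
      ∑ y, |empExp N μ0 (fun _ => h) (fun G => (P0 x0 G).1 y)
        - (P0 x0 (jointG μ0 h)).1 y| ≤ ε := by
  haveI : CompactSpace ↥(stdSimplex ℝ (X × U)) :=
    isCompact_iff_compactSpace.mp (isCompact_stdSimplex ℝ (X × U))
  have hcY : (0:ℝ) < Fintype.card X0 := by
    exact_mod_cast Fintype.card_pos
  set ε' : ℝ := ε / (2 * Fintype.card X0) with hε'def
  have hε' : 0 < ε' := div_pos hε (by positivity)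
  have HUC : ∀ x0 : X0, ∃ δ > (0:ℝ), ∀ a b : ↥(stdSimplex ℝ (X × U)),
      dist a b < δ → dist (P0 x0 a) (P0 x0 b) < ε' := by
    intro x0
    obtain ⟨δ, hδ, hd⟩ := Metric.uniformContinuous_iff.mp
      (CompactSpace.uniformContinuous_of_continuous (hP0 x0)) ε' hε'
    exact ⟨δ, hδ, fun a b hab => hd hab⟩
  choose δf hδf hand using HUC
  set δ0 : ℝ := Finset.univ.inf' Finset.univ_nonempty δf with hδ0def
  have hδ0 : 0 < δ0 := by
    rw [hδ0def, Finset.lt_inf'_iff]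
    exact fun x0 _ => hδf x0
  have hδ0le : ∀ x0, δ0 ≤ δf x0 := fun x0 => Finset.inf'_le _ (Finset.mem_univ x0)
  obtain ⟨K, hK⟩ := exists_nat_ge ((Fintype.card (X × U) : ℝ) * (2/δ0^2) / (ε/2))
  refine ⟨K, fun N hN h x0 => ?_⟩
  set G := jointG μ0 h with hGdef
  have pointwise : ∀ G' : ↥(stdSimplex ℝ (X × U)),
      ∑ y, |(P0 x0 G').1 y - (P0 x0 G).1 y| ≤ ε/2 + (2/δ0^2) * (dist G' G)^2 := by
    intro G'
    by_cases hd : dist G' G < δ0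
    · have h1 : dist (P0 x0 G') (P0 x0 G) < ε' :=
        hand x0 G' G (lt_of_lt_of_le hd (hδ0le x0))
      have h2 : ∀ y, |(P0 x0 G').1 y - (P0 x0 G).1 y| ≤ ε' := by
        intro y
        rw [← Real.dist_eq]
        refine le_trans ?_ (le_of_lt h1)
        rw [Subtype.dist_eq]
        exact dist_le_pi_dist _ _ y
      have h3 : ∑ y, |(P0 x0 G').1 y - (P0 x0 G).1 y| ≤ Fintype.card X0 * ε' := by
        refine le_trans (Finset.sum_le_sum fun y _ => h2 y) ?_
        rw [Finset.sum_const, Finset.card_univ, nsmul_eq_mul]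
      have h4 : (Fintype.card X0 : ℝ) * ε' = ε/2 := by
        rw [hε'def]
        field_simp
      refine le_trans h3 ?_
      rw [h4]
      have : 0 ≤ (2/δ0^2) * (dist G' G)^2 := by positivity
      linarith
    · push_neg at hd
      have h2 : ∑ y, |(P0 x0 G').1 y - (P0 x0 G).1 y| ≤ 2 := by
        have : ∀ y, |(P0 x0 G').1 y - (P0 x0 G).1 y|
            ≤ (P0 x0 G').1 y + (P0 x0 G).1 y := by
          intro y
          refine le_trans (abs_sub _ _) ?_
          rw [abs_of_nonneg ((P0 x0 G').2.1 y), abs_of_nonneg ((P0 x0 G).2.1 y)]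
        refine le_trans (Finset.sum_le_sum fun y _ => this y) ?_
        rw [Finset.sum_add_distrib, (P0 x0 G').2.2, (P0 x0 G).2.2]
        norm_num
      have h3 : 2 ≤ (2/δ0^2) * (dist G' G)^2 := by
        have hsq : δ0^2 ≤ (dist G' G)^2 := by
          apply sq_le_sq' <;> nlinarith
        rw [div_mul_eq_mul_div, le_div_iff₀ (by positivity)]
        nlinarith
      linarith
  have sum1 := sampleWeight_sum_one N μ0 h
  have Wnn := sampleWeight_nonneg N μ0 h
  have stepA : ∀ y : X0, empExp N μ0 (fun _ => h) (fun G => (P0 x0 G).1 y)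
      - (P0 x0 G).1 y
      = ∑ s : Fin (N+1) → X × U, sampleWeight N μ0 (fun _ => h) s *
          ((P0 x0 (empDist N s)).1 y - (P0 x0 G).1 y) := by
    intro y
    rw [empExp]
    rw [Finset.sum_congr rfl fun s _ => mul_sub (sampleWeight N μ0 (fun _ => h) s)
      ((P0 x0 (empDist N s)).1 y) ((P0 x0 G).1 y)]
    rw [Finset.sum_sub_distrib, ← Finset.sum_mul, sum1, one_mul]
  have stepB : ∑ y, |empExp N μ0 (fun _ => h) (fun G => (P0 x0 G).1 y) - (P0 x0 G).1 y|
      ≤ ∑ s : Fin (N+1) → X × U, sampleWeight N μ0 (fun _ => h) s *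
          ∑ y, |(P0 x0 (empDist N s)).1 y - (P0 x0 G).1 y| := by
    rw [Finset.sum_congr rfl fun s _ => Finset.mul_sum _ _ _]
    rw [Finset.sum_comm]
    refine Finset.sum_le_sum fun y _ => ?_
    rw [stepA y]
    refine le_trans (Finset.abs_sum_le_sum_abs _ _) ?_
    refine Finset.sum_le_sum fun s _ => ?_
    rw [abs_mul, abs_of_nonneg (Wnn s)]
  have stepC : ∑ s : Fin (N+1) → X × U, sampleWeight N μ0 (fun _ => h) s *
        ∑ y, |(P0 x0 (empDist N s)).1 y - (P0 x0 G).1 y|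
      ≤ ε/2 + (2/δ0^2) * ((Fintype.card (X × U)) / ((N:ℝ)+1)) := by
    have : ∀ s : Fin (N+1) → X × U, sampleWeight N μ0 (fun _ => h) s *
        ∑ y, |(P0 x0 (empDist N s)).1 y - (P0 x0 G).1 y|
        ≤ sampleWeight N μ0 (fun _ => h) s *
          (ε/2 + (2/δ0^2) * (dist (empDist N s) G)^2) := fun s =>
      mul_le_mul_of_nonneg_left (pointwise _) (Wnn s)
    refine le_trans (Finset.sum_le_sum fun s _ => this s) ?_
    have expand : ∀ s : Fin (N+1) → X × U, sampleWeight N μ0 (fun _ => h) s *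
        (ε/2 + (2/δ0^2) * (dist (empDist N s) G)^2)
        = (ε/2) * sampleWeight N μ0 (fun _ => h) s
          + (2/δ0^2) * (sampleWeight N μ0 (fun _ => h) s * (dist (empDist N s) G)^2) := by
      intro s; ring
    rw [Finset.sum_congr rfl fun s _ => expand s, Finset.sum_add_distrib,
      ← Finset.mul_sum, ← Finset.mul_sum, sum1, mul_one]
    have := exp_dist_sq N μ0 h
    rw [← hGdef] at this
    have h2 : (0:ℝ) ≤ 2/δ0^2 := by positivity
    nlinarith
  have stepD : (2/δ0^2) * ((Fintype.card (X × U)) / ((N:ℝ)+1)) ≤ ε/2 := by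
    have hN1 : ((Fintype.card (X × U) : ℝ) * (2/δ0^2) / (ε/2)) ≤ (N:ℝ) + 1 := by
      have : (K:ℝ) ≤ (N:ℝ) := by exact_mod_cast hN
      linarith
    rw [div_le_iff₀ (by positivity : (0:ℝ) < (ε/2))] at hN1
    rw [mul_comm, div_mul_eq_mul_div, div_le_iff₀ (by positivity : (0:ℝ) < (N:ℝ)+1)]
    nlinarith
  refine le_trans stepB (le_trans stepC ?_)
  linarith

lemma envLawMF_nonneg (μ0 : ↥(stdSimplex ℝ X)) (μ00 : ↥(stdSimplex ℝ X0))
    (P0 : X0 → ↥(stdSimplex ℝ (X × U)) → ↥(stdSimplex ℝ X0))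
    (π : ℕ → X0 → X → ↥(stdSimplex ℝ U)) (t : ℕ) (y : X0) :
    0 ≤ envLawMF μ0 μ00 P0 π t y := by
  induction t generalizing y with
  | zero => exact μ00.2.1 y
  | succ t ih =>
      exact Finset.sum_nonneg fun x0 _ =>
        mul_nonneg (ih x0) ((P0 x0 (jointG μ0 (π t x0))).2.1 y)

lemma envLawMF_sum_one (μ0 : ↥(stdSimplex ℝ X)) (μ00 : ↥(stdSimplex ℝ X0))
    (P0 : X0 → ↥(stdSimplex ℝ (X × U)) → ↥(stdSimplex ℝ X0))
    (π : ℕ → X0 → X → ↥(stdSimplex ℝ U)) (t : ℕ) :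
    ∑ y, envLawMF μ0 μ00 P0 π t y = 1 := by
  induction t with
  | zero => exact μ00.2.2
  | succ t ih =>
      show ∑ y, ∑ x0, envLawMF μ0 μ00 P0 π t x0 * (P0 x0 (jointG μ0 (π t x0))).1 y = 1
      rw [Finset.sum_comm]
      rw [Finset.sum_congr rfl fun x0 _ => (Finset.mul_sum _ _ _).symm]
      rw [Finset.sum_congr rfl fun x0 _ => by
        rw [(P0 x0 (jointG μ0 (π t x0))).2.2, mul_one]]
      exact ih

lemma empExp_coord_nonneg (N : ℕ) (μ0 : ↥(stdSimplex ℝ X)) (h : X → ↥(stdSimplex ℝ U))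
    (P0 : X0 → ↥(stdSimplex ℝ (X × U)) → ↥(stdSimplex ℝ X0)) (x0 : X0) (y : X0) :
    0 ≤ empExp N μ0 (fun _ => h) (fun G => (P0 x0 G).1 y) :=
  Finset.sum_nonneg fun s _ =>
    mul_nonneg (sampleWeight_nonneg N μ0 h s) ((P0 x0 (empDist N s)).2.1 y)

lemma empExp_coord_sum_one (N : ℕ) (μ0 : ↥(stdSimplex ℝ X)) (h : X → ↥(stdSimplex ℝ U))
    (P0 : X0 → ↥(stdSimplex ℝ (X × U)) → ↥(stdSimplex ℝ X0)) (x0 : X0) :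
    ∑ y, empExp N μ0 (fun _ => h) (fun G => (P0 x0 G).1 y) = 1 := by
  show ∑ y, ∑ s : Fin (N+1) → X × U,
      sampleWeight N μ0 (fun _ => h) s * (P0 x0 (empDist N s)).1 y = 1
  rw [Finset.sum_comm]
  rw [Finset.sum_congr rfl fun s _ => (Finset.mul_sum _ _ _).symm]
  rw [Finset.sum_congr rfl fun s _ => by rw [(P0 x0 (empDist N s)).2.2, mul_one]]
  exact sampleWeight_sum_one N μ0 h

lemma law_dist [Nonempty (X × U)] [Nonempty X0] (μ0 : ↥(stdSimplex ℝ X))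
    (μ00 : ↥(stdSimplex ℝ X0))
    (P0 : X0 → ↥(stdSimplex ℝ (X × U)) → ↥(stdSimplex ℝ X0))
    (hP0 : ∀ x0, Continuous (P0 x0)) (t : ℕ) {ε : ℝ} (hε : 0 < ε) :
    ∃ K : ℕ, ∀ N ≥ K, ∀ π : ℕ → X0 → X → ↥(stdSimplex ℝ U),
      ∑ y, |envLawN N μ0 μ00 P0 (fun _ => π) t y - envLawMF μ0 μ00 P0 π t y|
        ≤ t * ε := by
  induction t with
  | zero =>
      refine ⟨0, fun N _ π => ?_⟩
      show ∑ y : X0, |μ00.1 y - μ00.1 y| ≤ (0:ℕ) * ε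
      simp
  | succ t ih =>
      obtain ⟨K1, hK1⟩ := ih
      obtain ⟨K2, hK2⟩ := single_step μ0 P0 hP0 hε
      refine ⟨max K1 K2, fun N hN π => ?_⟩
      have hN1 : N ≥ K1 := le_trans (le_max_left _ _) hN
      have hN2 : N ≥ K2 := le_trans (le_max_right _ _) hN
      set ν := envLawN N μ0 μ00 P0 (fun _ => π) t with hν
      set m := envLawMF μ0 μ00 P0 π t with hm
      have hdiff : ∀ y, envLawN N μ0 μ00 P0 (fun _ => π) (t+1) y
          - envLawMF μ0 μ00 P0 π (t+1) y
          = ∑ x0, (ν x0 - m x0) * empExp N μ0 (fun _ => π t x0)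
              (fun G => (P0 x0 G).1 y)
            + ∑ x0, m x0 * (empExp N μ0 (fun _ => π t x0) (fun G => (P0 x0 G).1 y)
              - (P0 x0 (jointG μ0 (π t x0))).1 y) := by
        intro y
        show (∑ x0, ν x0 * empExp N μ0 (fun _ => π t x0) (fun G => (P0 x0 G).1 y))
          - (∑ x0, m x0 * (P0 x0 (jointG μ0 (π t x0))).1 y) = _
        rw [← Finset.sum_sub_distrib, ← Finset.sum_add_distrib]
        refine Finset.sum_congr rfl fun x0 _ => ?_
        ring
      have habs : ∀ y, |envLawN N μ0 μ00 P0 (fun _ => π) (t+1) y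
          - envLawMF μ0 μ00 P0 π (t+1) y|
          ≤ ∑ x0, |ν x0 - m x0| * empExp N μ0 (fun _ => π t x0)
              (fun G => (P0 x0 G).1 y)
            + ∑ x0, m x0 * |empExp N μ0 (fun _ => π t x0) (fun G => (P0 x0 G).1 y)
              - (P0 x0 (jointG μ0 (π t x0))).1 y| := by
        intro y
        rw [hdiff y]
        refine le_trans (abs_add_le _ _) (add_le_add ?_ ?_)
        · refine le_trans (Finset.abs_sum_le_sum_abs _ _) (Finset.sum_le_sum fun x0 _ => ?_)
          rw [abs_mul, abs_of_nonneg (empExp_coord_nonneg N μ0 (π t x0) P0 x0 y)]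
        · refine le_trans (Finset.abs_sum_le_sum_abs _ _) (Finset.sum_le_sum fun x0 _ => ?_)
          rw [abs_mul, abs_of_nonneg (envLawMF_nonneg μ0 μ00 P0 π t x0)]
      refine le_trans (Finset.sum_le_sum fun y (_ : y ∈ Finset.univ) => habs y) ?_
      rw [Finset.sum_add_distrib]
      have part1 : ∑ y : X0, ∑ x0, |ν x0 - m x0| * empExp N μ0 (fun _ => π t x0)
          (fun G => (P0 x0 G).1 y) ≤ t * ε := by
        rw [Finset.sum_comm]
        rw [Finset.sum_congr rfl fun x0 _ => (Finset.mul_sum _ _ _).symm]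
        rw [Finset.sum_congr rfl fun x0 _ => by
          rw [empExp_coord_sum_one N μ0 (π t x0) P0 x0, mul_one]]
        exact hK1 N hN1 π
      have part2 : ∑ y : X0, ∑ x0, m x0 * |empExp N μ0 (fun _ => π t x0)
          (fun G => (P0 x0 G).1 y) - (P0 x0 (jointG μ0 (π t x0))).1 y| ≤ ε := by
        rw [Finset.sum_comm]
        rw [Finset.sum_congr rfl fun x0 _ => (Finset.mul_sum _ _ _).symm]
        have hb : ∀ x0 : X0, m x0 * (∑ y, |empExp N μ0 (fun _ => π t x0)
            (fun G => (P0 x0 G).1 y) - (P0 x0 (jointG μ0 (π t x0))).1 y|) ≤ m x0 * ε :=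
          fun x0 => mul_le_mul_of_nonneg_left (hK2 N hN2 (π t x0) x0)
            (envLawMF_nonneg μ0 μ00 P0 π t x0)
        refine le_trans (Finset.sum_le_sum fun x0 _ => hb x0) ?_
        rw [← Finset.sum_mul, envLawMF_sum_one μ0 μ00 P0 π t, one_mul]
      push_cast
      linarith

end Helpers

/-- Under the continuity assumption on `r` and `P⁰`, for every `t ≥ 0` the law
of the `N`-agent environment state converges to the law of the mean-field environment state
uniformly over all mean-field policies:
`sup_{π∈Π} ‖L(x^{0,N}_t) − L(x^0_t)‖₁ → 0` as `N → ∞`, where `x^{0,N}_t` is the environment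
state of the `N`-agent system under the policy tuple `π^N(π)` and `x^0_t` is the mean-field
environment state under `π`.
(The number of agents is written as `N + 1`; the limit `N → ∞` is unaffected.) -/
theorem environment_law_tendsto_mean_field_law
    {X U X0 : Type*} [Fintype X] [Fintype U] [Fintype X0]
    [Nonempty X] [Nonempty U] [Nonempty X0] [DecidableEq X] [DecidableEq U]
    (μ0 : ↥(stdSimplex ℝ X)) (μ00 : ↥(stdSimplex ℝ X0))
    (P0 : X0 → ↥(stdSimplex ℝ (X × U)) → ↥(stdSimplex ℝ X0))
    -- continuity of P⁰ in the state-action distribution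
    (hP0 : ∀ x0, Continuous (P0 x0))
    (t : ℕ) :
    Tendsto (fun N : ℕ =>
        ⨆ π : ℕ → X0 → X → ↥(stdSimplex ℝ U),
          ∑ y : X0, |envLawN N μ0 μ00 P0 (fun _ => π) t y - envLawMF μ0 μ00 P0 π t y|)
      atTop (𝓝 0) := by
  rw [Metric.tendsto_atTop]
  intro ε hε
  have ht1 : (0:ℝ) < 2 * ((t:ℝ) + 1) := by positivity
  set ε' : ℝ := ε / (2 * ((t:ℝ) + 1)) with hε'def
  have hε' : 0 < ε' := div_pos hε ht1
  obtain ⟨K, hK⟩ := law_dist μ0 μ00 P0 hP0 t hε'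
  refine ⟨K, fun N hN => ?_⟩
  have hub : (⨆ π : ℕ → X0 → X → ↥(stdSimplex ℝ U),
      ∑ y : X0, |envLawN N μ0 μ00 P0 (fun _ => π) t y - envLawMF μ0 μ00 P0 π t y|)
      ≤ t * ε' := by
    refine Real.iSup_le (fun π => hK N hN π) ?_
    positivity
  have hlb : (0:ℝ) ≤ ⨆ π : ℕ → X0 → X → ↥(stdSimplex ℝ U),
      ∑ y : X0, |envLawN N μ0 μ00 P0 (fun _ => π) t y - envLawMF μ0 μ00 P0 π t y| :=
    Real.iSup_nonneg fun π => Finset.sum_nonneg fun y _ => abs_nonneg _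
  rw [Real.dist_eq, sub_zero, abs_of_nonneg hlb]
  have : (t:ℝ) * ε' < ε := by
    rw [hε'def, ← mul_div_assoc, div_lt_iff₀ ht1]
    nlinarith
  exact lt_of_le_of_lt hub this
end
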